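/- arXiv:2005.05419 — 7 statements merged into one kernel-verified Lean document; each statement's English description precedes it below -/
import Mathlib

section
/- Let f: ℝⁿ → ℝ be Lipschitz and c ∈ ℝ. Then the gradient ∇f(x) = 0 for almost every x in the level set {x : f(x) = c} (with respect to Lebesgue measure). -/
open MeasureTheory Metric Filter Set Topology

/-- At a Lebesgue density point of a set on which `f` takes the value `f x`, the derivative of
`f` vanishes. -/
lemma aux_fderiv_zero_of_density {n : ℕ} {s : Set (EuclideanSpace ℝ (Fin n))}
    {x : EuclideanSpace ℝ (Fin n)} {f : EuclideanSpace ℝ (Fin n) → ℝ}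
    {L : EuclideanSpace ℝ (Fin n) →L[ℝ] ℝ} (hs : MeasurableSet s)
    (hfd : HasFDerivAt f L x) (hfs : ∀ y ∈ s, f y = f x)
    (hd : Tendsto (fun r => volume (s ∩ closedBall x r) / volume (closedBall x r))
      (𝓝[>] 0) (𝓝 1)) : L = 0 := by
  have hrank : Module.finrank ℝ (EuclideanSpace ℝ (Fin n)) = n := finrank_euclideanSpace_fin
  ext v
  show L v = 0
  have key : ∀ ε ∈ Set.Ioc (0:ℝ) 1, |L v| ≤ ε * (‖v‖ + 1 + ‖L‖) := by
    rintro ε ⟨hε0, hε1⟩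
    have hlo := Asymptotics.isLittleO_iff.mp hfd.isLittleO hε0
    rw [Metric.eventually_nhds_iff] at hlo
    obtain ⟨δ, hδ0, hδ⟩ := hlo
    set a : ENNReal := ENNReal.ofReal ((ε / (‖v‖ + 1)) ^ n) with ha
    have hv1 : (0:ℝ) < ‖v‖ + 1 := by positivity
    have ha0 : a ≠ 0 := by
      simp only [ha, ne_eq, ENNReal.ofReal_eq_zero, not_le]
      positivity
    have h1a : (1:ENNReal) - a < 1 :=
      ENNReal.sub_lt_self ENNReal.one_ne_top one_ne_zero ha0
    have hev : ∀ᶠ ρ in 𝓝[>] (0:ℝ), ρ < δ ∧ 0 < ρ ∧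
        1 - a < volume (s ∩ closedBall x ρ) / volume (closedBall x ρ) := by
      refine Filter.Eventually.and ?_ (Filter.Eventually.and ?_ ?_)
      · exact eventually_nhdsWithin_of_eventually_nhds (eventually_lt_nhds hδ0)
      · exact eventually_mem_nhdsWithin
      · exact hd.eventually (eventually_gt_nhds h1a)
    obtain ⟨ρ, ⟨hρδ, hρ0, hρd⟩⟩ := hev.exists
    set t : ℝ := ρ / (‖v‖ + 1) with ht
    have ht0 : 0 < t := div_pos hρ0 hv1
    set y : EuclideanSpace ℝ (Fin n) := x + t • v with hy
    have hdyx : dist y x = t * ‖v‖ := by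
      simp [hy, dist_eq_norm, norm_smul, abs_of_pos ht0]
    have hsub : closedBall y (ε * t) ⊆ closedBall x ρ := by
      intro z hz
      simp only [mem_closedBall] at hz ⊢
      calc dist z x ≤ dist z y + dist y x := dist_triangle _ _ _
        _ ≤ ε * t + t * ‖v‖ := by gcongr; rw [hdyx]
        _ ≤ 1 * t + t * ‖v‖ := by gcongr
        _ = t * (‖v‖ + 1) := by ring
        _ = ρ := by rw [ht, div_mul_cancel₀ _ hv1.ne']
    have hBfin : volume (closedBall x ρ) ≠ ⊤ := measure_closedBall_lt_top.ne
    have hB0 : volume (closedBall x ρ) ≠ 0 := (measure_closedBall_pos volume x hρ0).ne'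
    have hsmall : volume (closedBall y (ε * t)) = a * volume (closedBall x ρ) := by
      rw [Measure.addHaar_closedBall volume y (by positivity),
          Measure.addHaar_closedBall volume x hρ0.le, hrank]
      have hεt : ε * t = (ε / (‖v‖ + 1)) * ρ := by rw [ht]; ring
      rw [hεt, mul_pow, ENNReal.ofReal_mul (by positivity), mul_assoc]
    have hmeet : (s ∩ closedBall y (ε * t)).Nonempty := by
      by_contra hcon
      rw [Set.not_nonempty_iff_eq_empty] at hcon
      have hdisj : s ∩ closedBall x ρ ⊆ closedBall x ρ \ closedBall y (ε * t) := by
        intro z hz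
        exact ⟨hz.2, fun hzb => Set.eq_empty_iff_forall_notMem.mp hcon z ⟨hz.1, hzb⟩⟩
      have hle : volume (s ∩ closedBall x ρ) ≤
          volume (closedBall x ρ) - a * volume (closedBall x ρ) := by
        calc volume (s ∩ closedBall x ρ) ≤ volume (closedBall x ρ \ closedBall y (ε * t)) :=
              measure_mono hdisj
          _ = volume (closedBall x ρ) - volume (closedBall y (ε * t)) :=
              measure_diff hsub measurableSet_closedBall.nullMeasurableSet
                measure_closedBall_lt_top.ne
          _ = volume (closedBall x ρ) - a * volume (closedBall x ρ) := by rw [hsmall]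
      have hratio : volume (s ∩ closedBall x ρ) / volume (closedBall x ρ) ≤ 1 - a := by
        rw [ENNReal.div_le_iff hB0 hBfin]
        calc volume (s ∩ closedBall x ρ)
            ≤ volume (closedBall x ρ) - a * volume (closedBall x ρ) := hle
          _ = 1 * volume (closedBall x ρ) - a * volume (closedBall x ρ) := by rw [one_mul]
          _ = (1 - a) * volume (closedBall x ρ) := (ENNReal.sub_mul (fun _ _ => hBfin)).symm
      exact absurd hρd (not_lt.mpr hratio)
    obtain ⟨z, hzs, hzb⟩ := hmeet
    simp only [mem_closedBall] at hzb
    have hzx : dist z x ≤ ρ := hsub hzb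
    have hder : ‖f z - f x - L (z - x)‖ ≤ ε * ‖z - x‖ := hδ (lt_of_le_of_lt hzx hρδ)
    rw [hfs z hzs, sub_self, zero_sub, norm_neg] at hder
    have hLtv : ‖L (t • v)‖ ≤ ε * ρ + ‖L‖ * (ε * t) := by
      have h1 : L (t • v) = L (z - x) - L (z - y) := by
        rw [← map_sub]
        congr 1
        rw [hy]
        abel
      rw [h1]
      calc ‖L (z - x) - L (z - y)‖ ≤ ‖L (z - x)‖ + ‖L (z - y)‖ := norm_sub_le _ _
        _ ≤ ε * ‖z - x‖ + ‖L‖ * ‖z - y‖ := by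
            gcongr
            exact L.le_opNorm _
        _ ≤ ε * ρ + ‖L‖ * (ε * t) := by
            gcongr
            · rw [← dist_eq_norm]; exact hzx
            · rw [← dist_eq_norm]; exact hzb
    have htLv : t * |L v| ≤ ε * ρ + ‖L‖ * (ε * t) := by
      have hnorm : ‖L (t • v)‖ = t * |L v| := by
        rw [L.map_smul]
        simp [abs_of_pos ht0, norm_smul]
      linarith [hLtv, hnorm.symm.le]
    have hρt : ρ = t * (‖v‖ + 1) := by rw [ht, div_mul_cancel₀ _ hv1.ne']
    rw [hρt] at htLv
    have hfin : t * |L v| ≤ t * (ε * (‖v‖ + 1 + ‖L‖)) := by nlinarith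
    exact le_of_mul_le_mul_left (by linarith) ht0
  have hle0 : |L v| ≤ 0 := by
    have htend : Tendsto (fun ε : ℝ => ε * (‖v‖ + 1 + ‖L‖)) (𝓝[>] 0) (𝓝 0) := by
      have h0 : Tendsto (fun ε : ℝ => ε * (‖v‖ + 1 + ‖L‖)) (𝓝 0) (𝓝 (0 * (‖v‖ + 1 + ‖L‖))) :=
        (continuous_id.mul continuous_const).tendsto 0
      rw [zero_mul] at h0
      exact h0.mono_left nhdsWithin_le_nhds
    refine ge_of_tendsto htend ?_
    filter_upwards [Ioc_mem_nhdsGT_of_mem (Set.mem_Ico.mpr ⟨le_refl 0, zero_lt_one⟩)] with ε hε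
    exact key ε hε
  exact abs_eq_zero.mp (le_antisymm hle0 (abs_nonneg _))

open Gradient in
/-- a Lipschitz function `f : ℝⁿ → ℝ` has vanishing gradient at almost
every point of each level set `{x | f x = c}` (with respect to Lebesgue measure). -/
theorem gradient_zero_ae_on_level_set {n : ℕ} (f : EuclideanSpace ℝ (Fin n) → ℝ)
    (K : NNReal) (hf : LipschitzWith K f) (c : ℝ) :
    ∀ᵐ x ∂((volume : Measure (EuclideanSpace ℝ (Fin n))).restrict {x | f x = c}),
      gradient f x = 0 := by
  set s : Set (EuclideanSpace ℝ (Fin n)) := {x | f x = c} with hsdef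
  have hs : MeasurableSet s := by
    have : s = f ⁻¹' {c} := rfl
    rw [this]
    exact hf.continuous.measurable (measurableSet_singleton c)
  filter_upwards [ae_restrict_of_ae
      (Besicovitch.ae_tendsto_measure_inter_div_of_measurableSet volume hs),
    ae_restrict_mem hs,
    ae_restrict_of_ae (hf.ae_differentiableAt (μ := volume))] with x hd hx hdiff
  have hfx : f x = c := hx
  have hfs : ∀ y ∈ s, f y = f x := fun y hy => by rw [hy, hfx]
  have hind : s.indicator (1 : EuclideanSpace ℝ (Fin n) → ENNReal) x = 1 :=
    Set.indicator_of_mem hx _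
  rw [hind] at hd
  have hL : fderiv ℝ f x = 0 :=
    aux_fderiv_zero_of_density hs hdiff.hasFDerivAt hfs hd
  simp [gradient, hL]
end

section
/- Let B be a subset of a metric space with subsets A₁, A₂ ⊂ B, let L > 0, and let f̃: A₁ ∪ A₂ → ℝ and g: B → ℝ be Lipschitz with constants at most L, such that f̃ = g on A₁ and f̃ = 0 on A₂. Then f̃ extends to a Lipschitz function f: B → ℝ with Lipschitz constant at most L satisfying g ∧ 0 ≤ f ≤ g ∨ 0 on B and ‖f‖_∞ ≤ ‖g‖_∞. -/
/-- McShane variant: given `A₁, A₂ ⊆ B` in a metric space, `L > 0`, and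
Lipschitz maps `ft` (on `A₁ ∪ A₂`) and `g` (on `B`) with constants at most `L` such that
`ft = g` on `A₁` and `ft = 0` on `A₂`, there is a Lipschitz extension `f` of `ft` to `B`
with constant at most `L` satisfying `g ∧ 0 ≤ f ≤ g ∨ 0` on `B` and `‖f‖_∞ ≤ ‖g‖_∞`. -/
theorem mcshane_variant {X : Type*} [PseudoMetricSpace X] (B A₁ A₂ : Set X)
    (h₁ : A₁ ⊆ B) (h₂ : A₂ ⊆ B) (L : NNReal) (hL : 0 < L) (ft g : X → ℝ)
    (hft : LipschitzOnWith L ft (A₁ ∪ A₂)) (hg : LipschitzOnWith L g B)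
    (hfg : ∀ x ∈ A₁, ft x = g x) (hf0 : ∀ x ∈ A₂, ft x = 0) :
    ∃ f : X → ℝ, LipschitzOnWith L f B ∧ (∀ x ∈ A₁ ∪ A₂, f x = ft x) ∧
      (∀ x ∈ B, min (g x) 0 ≤ f x ∧ f x ≤ max (g x) 0) ∧
      (∀ M : ℝ, (∀ x ∈ B, |g x| ≤ M) → ∀ x ∈ B, |f x| ≤ M) := by
  obtain ⟨h, hhL, hhext⟩ := hft.extend_real
  set f : X → ℝ := fun x => max (min (h x) (max (g x) 0)) (min (g x) 0) with hf
  have hgrestr : LipschitzWith L (B.restrict g) := lipschitzOnWith_iff_restrict.mp hg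
  have hhrestr : LipschitzWith L (B.restrict h) :=
    lipschitzOnWith_iff_restrict.mp (hhL.lipschitzOnWith)
  have hfL : LipschitzOnWith L f B := by
    rw [lipschitzOnWith_iff_restrict]
    have := ((hhrestr.min (hgrestr.max_const 0)).max (hgrestr.min_const 0))
    simp only [max_self] at this
    exact this
  refine ⟨f, hfL, ?_, ?_, ?_⟩
  · intro x hx
    have hhx : h x = ft x := (hhext hx).symm
    rcases hx with hx | hx
    · have hgx : ft x = g x := hfg x hx
      simp only [hf, hhx, hgx]
      rw [min_eq_left (le_max_left _ _), max_eq_left (min_le_left _ _)]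
    · have hgx : ft x = 0 := hf0 x hx
      simp only [hf, hhx, hgx]
      rw [min_eq_left (le_max_right _ _), max_eq_left (min_le_right _ _)]
  · intro x hx
    constructor
    · exact le_max_right _ _
    · exact max_le (min_le_right _ _) ((min_le_left _ _).trans (le_max_left _ _))
  · intro M hM x hx
    have habs := hM x hx
    have h1 : -M ≤ g x := neg_le_of_abs_le habs
    have h2 : g x ≤ M := le_of_abs_le habs
    have hM0 : 0 ≤ M := (abs_nonneg _).trans habs
    rw [abs_le]
    constructor
    · exact le_trans (le_min h1 (neg_nonpos_of_nonneg hM0)) (le_max_right _ _)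
    · exact max_le ((min_le_right _ _).trans (max_le h2 hM0))
        ((min_le_right _ _).trans hM0)
end

section
/- Let V: Lip(S^{n-1}) → ℝ be a τ-continuous valuation. Then V is bounded on norm-bounded sets: for every M > 0, sup{|V(f)| : ‖f‖ ≤ M} < ∞. -/
open MeasureTheory Metric Set Filter Topology Classical
open scoped ENNReal NNReal

noncomputable section

/-- Euclidean space `ℝⁿ`. -/
abbrev Eucl (n : ℕ) := EuclideanSpace ℝ (Fin n)

/-- The unit sphere `S^{n-1} ⊆ ℝⁿ`. -/
abbrev Sph (n : ℕ) : Set (Eucl n) := Metric.sphere (0 : Eucl n) 1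

/-- The `(n-1)`-dimensional Hausdorff measure on the sphere, normalized to total mass 1. -/
noncomputable def sphMeasure (n : ℕ) : Measure (Sph n) :=
  ((μH[(n : ℝ) - 1] : Measure (Sph n)) Set.univ)⁻¹ • (μH[(n : ℝ) - 1] : Measure (Sph n))

/-- The `0`-homogeneous extension of a function on the sphere. -/
noncomputable def homExt {n : ℕ} (f : Sph n → ℝ) (y : Eucl n) : ℝ :=
  if h : y = (0 : Eucl n) then 0 else
    f ⟨‖y‖⁻¹ • y, by
      simp [mem_sphere_zero_iff_norm, norm_smul, norm_inv,
        inv_mul_cancel₀ (norm_ne_zero_iff.mpr h)]⟩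

/-- The spherical gradient of `f : S^{n-1} → ℝ`, realized as the (Euclidean) gradient of
its `0`-homogeneous extension, which is tangential at points of the sphere. -/
noncomputable def sphGrad {n : ℕ} (f : Sph n → ℝ) (y : Eucl n) : Eucl n :=
  gradient (homExt f) y

/-- `f` belongs to `Lip(S^{n-1})`. -/
def IsLip {n : ℕ} (f : Sph n → ℝ) : Prop := ∃ L : ℝ≥0, LipschitzWith L f

/-- `‖f‖ = max (‖f‖_∞, L(f)) ≤ M`. -/
def NormBound {n : ℕ} (M : ℝ) (f : Sph n → ℝ) : Prop :=
  (∀ x, |f x| ≤ M) ∧ LipschitzWith (Real.toNNReal M) f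

/-- τ-convergence of a sequence in `Lip(S^{n-1})`: uniform convergence, a uniform a.e.
bound on the gradients, and a.e. convergence of the gradients. -/
def TauTendsto {n : ℕ} (fk : ℕ → Sph n → ℝ) (f : Sph n → ℝ) : Prop :=
  TendstoUniformly fk f atTop ∧
  (∃ C : ℝ, ∀ k, ∀ᵐ (x : Sph n) ∂(sphMeasure n), ‖sphGrad (fk k) (x : Eucl n)‖ ≤ C) ∧
  (∀ᵐ (x : Sph n) ∂(sphMeasure n),
    Tendsto (fun k => sphGrad (fk k) (x : Eucl n)) atTop (𝓝 (sphGrad f (x : Eucl n))))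

/-- `V` is a valuation on `Lip(S^{n-1})`. -/
def IsValuation {n : ℕ} (V : (Sph n → ℝ) → ℝ) : Prop :=
  ∀ f g : Sph n → ℝ, IsLip f → IsLip g → V (f ⊔ g) + V (f ⊓ g) = V f + V g

/-- τ-continuity of a functional on `Lip(S^{n-1})`. -/
def TauContinuous {n : ℕ} (V : (Sph n → ℝ) → ℝ) : Prop :=
  ∀ (fk : ℕ → Sph n → ℝ) (f : Sph n → ℝ), (∀ k, IsLip (fk k)) → IsLip f →
    TauTendsto fk f → Tendsto (fun k => V (fk k)) atTop (𝓝 (V f))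

/-- The metric `d_τ(f,g) = ‖f - g‖_∞ + ∫ ‖∇f - ∇g‖ dH^{n-1}`. -/
noncomputable def dTau {n : ℕ} (f g : Sph n → ℝ) : ℝ :=
  (⨆ x : Sph n, |f x - g x|) +
    ∫ x : Sph n, ‖sphGrad f (x : Eucl n) - sphGrad g (x : Eucl n)‖ ∂(sphMeasure n)

/-- The action of an orthogonal map `φ ∈ O(n)` on the sphere. -/
noncomputable def rotAct {n : ℕ} (φ : Eucl n ≃ₗᵢ[ℝ] Eucl n) (x : Sph n) : Sph n :=
  ⟨φ (x : Eucl n), by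
    rw [mem_sphere_zero_iff_norm, φ.norm_map, ← mem_sphere_zero_iff_norm]
    exact x.2⟩

/-- Rotation invariance of a functional on `Lip(S^{n-1})`. -/
def RotInv {n : ℕ} (V : (Sph n → ℝ) → ℝ) : Prop :=
  ∀ (φ : Eucl n ≃ₗᵢ[ℝ] Eucl n) (f : Sph n → ℝ), V (f ∘ rotAct φ) = V f

namespace TauVal
variable {n : ℕ}

lemma norm_coe (x : Sph n) : ‖(x : Eucl n)‖ = 1 := mem_sphere_zero_iff_norm.mp x.2

lemma homExt_apply {f : Sph n → ℝ} {y : Eucl n} (hy : y ≠ 0) :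
    homExt f y = f ⟨‖y‖⁻¹ • y, by
      simp [mem_sphere_zero_iff_norm, norm_smul, norm_inv,
        inv_mul_cancel₀ (norm_ne_zero_iff.mpr hy)]⟩ := dif_neg hy

lemma norm_pos_of_near {x : Sph n} {y : Eucl n} (hy : ‖y - (x : Eucl n)‖ < 1/2) :
    (1:ℝ)/2 < ‖y‖ := by
  have hx : ‖(x : Eucl n)‖ = 1 := norm_coe x
  have h := norm_sub_norm_le (x : Eucl n) y
  rw [← norm_neg ((x:Eucl n) - y), neg_sub] at h
  linarith

lemma dist_normalize_le {x : Sph n} {y : Eucl n} (hy : ‖y - (x : Eucl n)‖ < 1/2) :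
    ‖‖y‖⁻¹ • y - (x : Eucl n)‖ ≤ 2 * ‖y - (x : Eucl n)‖ := by
  have h1 : (1:ℝ)/2 < ‖y‖ := norm_pos_of_near hy
  have h0 : ‖y‖ ≠ 0 := by positivity
  have hx : ‖(x : Eucl n)‖ = 1 := norm_coe x
  have e1 : ‖y‖⁻¹ • y - y = (‖y‖⁻¹ - 1) • y := by rw [sub_smul, one_smul]
  have e2 : ‖‖y‖⁻¹ • y - y‖ = |1 - ‖y‖| := by
    rw [e1, norm_smul, Real.norm_eq_abs]
    rw [← abs_of_nonneg (norm_nonneg y), ← abs_mul]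
    congr 1
    field_simp
    rw [abs_of_nonneg (norm_nonneg y)]; ring
  have e3 : |1 - ‖y‖| ≤ ‖y - (x:Eucl n)‖ := by
    have h := norm_sub_norm_le y (x : Eucl n)
    have h' := norm_sub_norm_le (x:Eucl n) y
    rw [← norm_neg ((x:Eucl n) - y), neg_sub] at h'
    rw [hx] at h h'
    rw [abs_le]; constructor <;> linarith
  calc ‖‖y‖⁻¹ • y - (x:Eucl n)‖ ≤ ‖‖y‖⁻¹ • y - y‖ + ‖y - (x:Eucl n)‖ := by
        have := norm_sub_le_norm_sub_add_norm_sub (‖y‖⁻¹ • y) y (x:Eucl n)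
        exact this
  _ ≤ 2 * ‖y - (x:Eucl n)‖ := by rw [e2]; linarith

lemma homExt_eventuallyEq {f g : Sph n → ℝ} (x : Sph n) {δ : ℝ} (hδ : 0 < δ)
    (h : ∀ y : Sph n, dist (y : Eucl n) (x : Eucl n) < δ → f y = g y) :
    homExt f =ᶠ[𝓝 (x : Eucl n)] homExt g := by
  have hρ : 0 < min (δ/3) (1/3) := by positivity
  filter_upwards [Metric.ball_mem_nhds (x : Eucl n) hρ] with y hy
  rw [Metric.mem_ball, dist_eq_norm] at hy
  have hy2 : ‖y - (x:Eucl n)‖ < 1/2 := lt_of_lt_of_le hy (le_trans (min_le_right _ _) (by norm_num))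
  have hy0 : y ≠ 0 := by
    have := norm_pos_of_near (x := x) hy2
    intro h0; rw [h0, norm_zero] at this; linarith
  rw [homExt_apply hy0, homExt_apply hy0]
  apply h
  have := dist_normalize_le (x := x) hy2
  rw [dist_eq_norm]
  calc ‖(‖y‖⁻¹ • y) - (x:Eucl n)‖ ≤ 2 * ‖y - (x:Eucl n)‖ := this
  _ < 2 * min (δ/3) (1/3) := by linarith
  _ ≤ δ := by have := min_le_left (δ/3) (1/3); linarith [hδ]

lemma sphGrad_congr {f g : Sph n → ℝ} (x : Sph n) {δ : ℝ} (hδ : 0 < δ)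
    (h : ∀ y : Sph n, dist (y : Eucl n) (x : Eucl n) < δ → f y = g y) :
    sphGrad f (x : Eucl n) = sphGrad g (x : Eucl n) :=
  Filter.EventuallyEq.gradient_eq (homExt_eventuallyEq x hδ h)

lemma sphGrad_const (c : ℝ) (x : Sph n) : sphGrad (fun _ => c) (x : Eucl n) = 0 := by
  have : homExt (fun _ => c : Sph n → ℝ) =ᶠ[𝓝 (x : Eucl n)] (fun _ => c) := by
    filter_upwards [Metric.ball_mem_nhds (x : Eucl n) (by norm_num : (0:ℝ) < 1/2)] with y hy
    rw [Metric.mem_ball, dist_eq_norm] at hy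
    have hy0 : y ≠ 0 := by
      have := norm_pos_of_near (x := x) hy
      intro h0; rw [h0, norm_zero] at this; linarith
    rw [homExt_apply hy0]
  rw [sphGrad, Filter.EventuallyEq.gradient_eq this, gradient_fun_const]

lemma sphGrad_norm_le {f : Sph n → ℝ} {K : ℝ≥0} (hf : LipschitzWith K f) (x : Sph n) :
    ‖sphGrad f (x : Eucl n)‖ ≤ 2 * K := by
  have hb : ‖sphGrad f (x:Eucl n)‖ = ‖fderiv ℝ (homExt f) (x:Eucl n)‖ := by
    rw [sphGrad, gradient]
    exact (InnerProductSpace.toDual ℝ (Eucl n)).symm.norm_map _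
  rw [hb]
  apply norm_fderiv_le_of_lip' ℝ (by positivity : (0:ℝ) ≤ 2 * K)
  filter_upwards [Metric.ball_mem_nhds (x : Eucl n) (by norm_num : (0:ℝ) < 1/2)] with y hy
  rw [Metric.mem_ball, dist_eq_norm] at hy
  have hy0 : y ≠ 0 := by
    have := norm_pos_of_near (x := x) hy
    intro h0; rw [h0, norm_zero] at this; linarith
  have hx0 : (x : Eucl n) ≠ 0 := by
    intro h0; have := norm_coe x; rw [h0, norm_zero] at this; linarith
  rw [homExt_apply hy0, homExt_apply hx0]
  have hxx : (⟨‖(x:Eucl n)‖⁻¹ • (x:Eucl n), by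
      simp [mem_sphere_zero_iff_norm, norm_smul, norm_inv,
        inv_mul_cancel₀ (norm_ne_zero_iff.mpr hx0)]⟩ : Sph n) = x := by
    apply Subtype.ext
    simp [norm_coe x]
  rw [hxx]
  have hlip := hf.dist_le_mul (⟨‖y‖⁻¹ • y, by
      simp [mem_sphere_zero_iff_norm, norm_smul, norm_inv,
        inv_mul_cancel₀ (norm_ne_zero_iff.mpr hy0)]⟩ : Sph n) x
  rw [Real.dist_eq] at hlip
  have hsub : dist ((⟨‖y‖⁻¹ • y, by
      simp [mem_sphere_zero_iff_norm, norm_smul, norm_inv,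
        inv_mul_cancel₀ (norm_ne_zero_iff.mpr hy0)]⟩ : Sph n)) x = ‖‖y‖⁻¹ • y - (x:Eucl n)‖ := by
    rw [Subtype.dist_eq, dist_eq_norm]
  rw [hsub] at hlip
  have h2 := dist_normalize_le (x := x) hy
  rw [Real.norm_eq_abs]
  calc |f _ - f x| ≤ K * ‖‖y‖⁻¹ • y - (x:Eucl n)‖ := hlip
  _ ≤ K * (2 * ‖y - (x:Eucl n)‖) := by
      apply mul_le_mul_of_nonneg_left h2 (K.coe_nonneg)
  _ = 2 * K * ‖y - (x:Eucl n)‖ := by ring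


variable {ι : Type*}

lemma isLip_sup (f g : Sph n → ℝ) (hf : IsLip f) (hg : IsLip g) : IsLip (f ⊔ g) := by
  obtain ⟨K1, h1⟩ := hf; obtain ⟨K2, h2⟩ := hg
  exact ⟨max K1 K2, by simpa [Pi.sup_def] using h1.max h2⟩

lemma isLip_inf (f g : Sph n → ℝ) (hf : IsLip f) (hg : IsLip g) : IsLip (f ⊓ g) := by
  obtain ⟨K1, h1⟩ := hf; obtain ⟨K2, h2⟩ := hg
  exact ⟨max K1 K2, by simpa [Pi.inf_def] using h1.min h2⟩

lemma lipschitzWith_inf_same {K : ℝ≥0} (f g : Sph n → ℝ) (hf : LipschitzWith K f)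
    (hg : LipschitzWith K g) : LipschitzWith K (f ⊓ g) := by
  simpa [Pi.inf_def, max_self] using hf.min hg

lemma lipschitzWith_sup_same {K : ℝ≥0} (f g : Sph n → ℝ) (hf : LipschitzWith K f)
    (hg : LipschitzWith K g) : LipschitzWith K (f ⊔ g) := by
  simpa [Pi.sup_def, max_self] using hf.max hg

lemma isLip_sup' (s : Finset ι) (hs : s.Nonempty) (u : ι → Sph n → ℝ)
    (hu : ∀ i ∈ s, IsLip (u i)) : IsLip (s.sup' hs u) := by
  induction hs using Finset.Nonempty.cons_induction with
  | singleton a => simpa using hu a (by simp)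
  | cons a s ha hs ih =>
      rw [Finset.sup'_cons (H := hs)]
      exact isLip_sup _ _ (hu a (by simp)) (ih fun i hi => hu i (by simp [hi]))

lemma isLip_inf' (s : Finset ι) (hs : s.Nonempty) (u : ι → Sph n → ℝ)
    (hu : ∀ i ∈ s, IsLip (u i)) : IsLip (s.inf' hs u) := by
  induction hs using Finset.Nonempty.cons_induction with
  | singleton a => simpa using hu a (by simp)
  | cons a s ha hs ih =>
      rw [Finset.inf'_cons (H := hs)]
      exact isLip_inf _ _ (hu a (by simp)) (ih fun i hi => hu i (by simp [hi]))

lemma lipschitzWith_inf'_same {K : ℝ≥0} (s : Finset ι) (hs : s.Nonempty) (u : ι → Sph n → ℝ)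
    (hu : ∀ i ∈ s, LipschitzWith K (u i)) : LipschitzWith K (s.inf' hs u) := by
  induction hs using Finset.Nonempty.cons_induction with
  | singleton a => simpa using hu a (by simp)
  | cons a s ha hs ih =>
      rw [Finset.inf'_cons (H := hs)]
      exact lipschitzWith_inf_same _ _ (hu a (by simp)) (ih fun i hi => hu i (by simp [hi]))

lemma inf_sup'_distrib (s : Finset ι) (hs : s.Nonempty) (u : ι → Sph n → ℝ) (v : Sph n → ℝ) :
    v ⊓ s.sup' hs u = s.sup' hs (fun i => v ⊓ u i) := by
  induction hs using Finset.Nonempty.cons_induction with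
  | singleton a => simp
  | cons a s ha hs ih => rw [Finset.sup'_cons (H := hs), Finset.sup'_cons (H := hs), inf_sup_left, ih]

lemma inf_inf'_distrib (s : Finset ι) (hs : s.Nonempty) (u : ι → Sph n → ℝ) (v : Sph n → ℝ) :
    v ⊓ s.inf' hs u = s.inf' hs (fun i => v ⊓ u i) := by
  induction hs using Finset.Nonempty.cons_induction with
  | singleton a => simp
  | cons a s ha hs ih => rw [Finset.inf'_cons (H := hs), Finset.inf'_cons (H := hs), inf_inf_distrib_left, ih]

lemma ie_bound (V : (Sph n → ℝ) → ℝ) (hval : IsValuation V) (s : Finset ι) (hs : s.Nonempty) :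
    ∀ (u : ι → Sph n → ℝ) (_ : ∀ i ∈ s, IsLip (u i)) (B : ℝ) (_ : 0 ≤ B)
      (_ : ∀ t : Finset ι, t ⊆ s → ∀ ht : t.Nonempty, |V (t.inf' ht u)| ≤ B),
      |V (s.sup' hs u)| ≤ 3 ^ s.card * B := by
  induction hs using Finset.Nonempty.cons_induction with
  | singleton a =>
      intro u hu B hB0 hB
      have h := hB {a} (by simp) (by simp)
      simp only [Finset.inf'_singleton] at h
      simp only [Finset.sup'_singleton, Finset.card_singleton]
      calc |V (u a)| ≤ B := h
      _ ≤ 3 ^ 1 * B := by nlinarith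
  | cons a s ha hs ih =>
      intro u hu B hB0 hB
      have hmema : a ∈ Finset.cons a s ha := by simp
      have hsub : s ⊆ Finset.cons a s ha := by intro i hi; simp [hi]
      have hLa : IsLip (u a) := hu a hmema
      have hLX : IsLip (s.sup' hs u) := isLip_sup' s hs u (fun i hi => hu i (hsub hi))
      have hval' := hval (u a) (s.sup' hs u) hLa hLX
      have hXbound : |V (s.sup' hs u)| ≤ 3 ^ s.card * B := by
        apply ih u (fun i hi => hu i (hsub hi)) B hB0
        intro t hts htne
        exact hB t (hts.trans hsub) htne
      have hQ : u a ⊓ s.sup' hs u = s.sup' hs (fun i => u a ⊓ u i) :=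
        inf_sup'_distrib s hs u (u a)
      have hQbound : |V (u a ⊓ s.sup' hs u)| ≤ 3 ^ s.card * B := by
        rw [hQ]
        apply ih (fun i => u a ⊓ u i) (fun i hi => isLip_inf _ _ hLa (hu i (hsub hi))) B hB0
        intro t hts htne
        have h1 : t.inf' htne (fun i => u a ⊓ u i) = u a ⊓ t.inf' htne u :=
          (inf_inf'_distrib t htne u (u a)).symm
        have hat : a ∉ t := fun hat => ha (hts hat)
        have h2 : (insert a t).inf' (by simp) u = u a ⊓ t.inf' htne u := by
          rw [Finset.inf'_insert]
        rw [h1, ← h2]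
        apply hB
        intro i hi
        rcases Finset.mem_insert.mp hi with rfl | hi
        · exact hmema
        · exact hsub (hts hi)
      have haB : |V (u a)| ≤ B := by
        have h := hB {a} (by intro i hi; simp at hi; simp [hi]) (by simp)
        simpa using h
      have hVeq : V (u a ⊔ s.sup' hs u) = V (u a) + V (s.sup' hs u) - V (u a ⊓ s.sup' hs u) := by
        linarith [hval']
      rw [Finset.sup'_cons (H := hs), hVeq, Finset.card_cons]
      have h3 : (1:ℝ) ≤ 3 ^ s.card := one_le_pow₀ (by norm_num)
      have habs : |V (u a) + V (s.sup' hs u) - V (u a ⊓ s.sup' hs u)|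
          ≤ |V (u a)| + |V (s.sup' hs u)| + |V (u a ⊓ s.sup' hs u)| := by
        calc |V (u a) + V (s.sup' hs u) - V (u a ⊓ s.sup' hs u)|
            ≤ |V (u a) + V (s.sup' hs u)| + |V (u a ⊓ s.sup' hs u)| := abs_sub _ _
        _ ≤ |V (u a)| + |V (s.sup' hs u)| + |V (u a ⊓ s.sup' hs u)| := by
            have := abs_add_le (V (u a)) (V (s.sup' hs u)); linarith
      have hpow : (3:ℝ) ^ (s.card + 1) = 3 * 3 ^ s.card := by ring
      rw [hpow]
      nlinarith [hXbound, hQbound, haB, hB0, h3]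

lemma isLip_const (c : ℝ) : IsLip (fun _ : Sph n => c) := ⟨0, LipschitzWith.const c⟩

lemma tauTendsto_const {t : ℕ → ℝ} {t₀ : ℝ} (ht : Tendsto t atTop (𝓝 t₀)) :
    TauTendsto (fun k => (fun _ : Sph n => t k)) (fun _ : Sph n => t₀) := by
  refine ⟨?_, ⟨0, fun k => ?_⟩, ?_⟩
  · rw [Metric.tendstoUniformly_iff]
    intro ε hε
    filter_upwards [Metric.tendsto_nhds.mp ht ε hε] with k hk x
    rw [dist_comm] at hk; exact hk
  · exact Filter.Eventually.of_forall fun x => by rw [sphGrad_const]; simp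
  · exact Filter.Eventually.of_forall fun x => by
      simp only [sphGrad_const]; exact tendsto_const_nhds

lemma vconst_continuous {V : (Sph n → ℝ) → ℝ} (hτ : TauContinuous V) :
    Continuous (fun t : ℝ => V (fun _ : Sph n => t)) := by
  apply SeqContinuous.continuous
  intro t t₀ ht
  exact hτ _ _ (fun k => isLip_const _) (isLip_const _) (tauTendsto_const ht)

lemma vconst_bound {V : (Sph n → ℝ) → ℝ} (hτ : TauContinuous V) (M : ℝ) :
    ∃ c₀ : ℝ, 0 ≤ c₀ ∧ ∀ t ∈ Icc (-M) M, |V (fun _ : Sph n => t)| ≤ c₀ := by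
  obtain ⟨C, hC⟩ := (isCompact_Icc (a := -M) (b := M)).exists_bound_of_continuousOn
    ((vconst_continuous hτ).continuousOn)
  exact ⟨max C 0, le_max_right _ _, fun t hT => by
    have := hC t hT; rw [Real.norm_eq_abs] at this; exact this.trans (le_max_left _ _)⟩

lemma pigeonhole (φ : ℕ → ℝ) (N : ℕ) (hN : 0 < N) (Δ : ℝ) (hΔ : Δ ≤ |φ N - φ 0|) :
    ∃ i < N, Δ / N ≤ |φ (i + 1) - φ i| := by
  rcases le_or_gt Δ 0 with h | h
  · exact ⟨0, hN, le_trans (div_nonpos_of_nonpos_of_nonneg h (Nat.cast_nonneg N)) (abs_nonneg _)⟩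
  by_contra hcon
  push_neg at hcon
  have hsum : φ N - φ 0 = ∑ i ∈ Finset.range N, (φ (i + 1) - φ i) :=
    (Finset.sum_range_sub φ N).symm
  have h1 : |φ N - φ 0| ≤ ∑ i ∈ Finset.range N, |φ (i + 1) - φ i| := by
    rw [hsum]; exact Finset.abs_sum_le_sum_abs _ _
  have h2 : ∑ i ∈ Finset.range N, |φ (i + 1) - φ i| < ∑ _i ∈ Finset.range N, Δ / N := by
    apply Finset.sum_lt_sum_of_nonempty (by simp [Finset.nonempty_range_iff]; omega)
    intro i hi
    exact hcon i (Finset.mem_range.mp hi)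
  rw [Finset.sum_const, Finset.card_range, nsmul_eq_mul] at h2
  have hNne : (N : ℝ) ≠ 0 := Nat.cast_ne_zero.mpr hN.ne'
  rw [mul_div_cancel₀ _ hNne] at h2
  linarith

lemma sphere_nonempty' (hn : 1 ≤ n) : Nonempty (Sph n) := by
  have : Nontrivial (Eucl n) := by
    apply Module.nontrivial_of_finrank_pos (R := ℝ)
    rw [finrank_euclideanSpace_fin]
    omega
  obtain ⟨x, hx⟩ := NormedSpace.sphere_nonempty (x := (0 : Eucl n)) (r := 1).mpr (by norm_num)
  exact ⟨⟨x, hx⟩⟩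

lemma sphere_cover (hn : 1 ≤ n) (r : ℝ) (hr : 0 < r) :
    ∃ (s : Finset (Sph n)), s.Nonempty ∧ ∀ x : Sph n, ∃ i ∈ s, dist x i < r := by
  have hco : CompactSpace (Sph n) :=
    isCompact_iff_compactSpace.mp (isCompact_sphere (0 : Eucl n) 1)
  have hcov : (univ : Set (Sph n)) ⊆ ⋃ i : Sph n, Metric.ball i r := by
    intro x _
    exact mem_iUnion.mpr ⟨x, Metric.mem_ball_self hr⟩
  obtain ⟨s, hs⟩ := isCompact_univ.elim_finite_subcover (fun i : Sph n => Metric.ball i r)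
    (fun i => Metric.isOpen_ball) hcov
  have hmem : ∀ x : Sph n, ∃ i ∈ s, dist x i < r := by
    intro x
    have := hs (mem_univ x)
    rw [mem_iUnion₂] at this
    obtain ⟨i, hi, hx⟩ := this
    exact ⟨i, hi, Metric.mem_ball.mp hx⟩
  have : Nonempty (Sph n) := sphere_nonempty' hn
  obtain ⟨x₀⟩ := this
  obtain ⟨i₀, hi₀, _⟩ := hmem x₀
  exact ⟨s, ⟨i₀, hi₀⟩, hmem⟩

lemma coe_dist_le_two (x y : Sph n) : dist x y ≤ 2 := by
  rw [Subtype.dist_eq, dist_eq_norm]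
  calc ‖(x:Eucl n) - (y:Eucl n)‖ ≤ ‖(x:Eucl n)‖ + ‖(y:Eucl n)‖ := norm_sub_le _ _
  _ = 2 := by rw [norm_coe, norm_coe]; norm_num

lemma cone_lip (b lam r : ℝ) (hlam : 0 ≤ lam) (i : Sph n) :
    LipschitzWith (Real.toNNReal lam) (fun y : Sph n => b - lam * max (dist y i - r) 0) := by
  apply LipschitzWith.of_dist_le_mul
  intro x y
  rw [Real.dist_eq, Real.coe_toNNReal _ hlam]
  obtain ⟨X, hX⟩ : ∃ X : ℝ, X = max (dist x i - r) 0 := ⟨_, rfl⟩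
  obtain ⟨Y, hY⟩ : ∃ Y : ℝ, Y = max (dist y i - r) 0 := ⟨_, rfl⟩
  have h1 : |X - Y| ≤ |dist x i - r - (dist y i - r)| := by
    rw [hX, hY]; exact abs_max_sub_max_le_abs _ _ 0
  have h2 : dist x i - r - (dist y i - r) = dist x i - dist y i := by ring
  have h3 : |dist x i - dist y i| ≤ dist x y := abs_dist_sub_le _ _ _
  rw [← hX, ← hY]
  have h4 : b - lam * X - (b - lam * Y) = lam * (Y - X) := by ring
  rw [h4, abs_mul, abs_of_nonneg hlam, abs_sub_comm Y X]
  rw [h2] at h1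
  exact mul_le_mul_of_nonneg_left (h1.trans h3) hlam

lemma key_construction (hn : 1 ≤ n) (V : (Sph n → ℝ) → ℝ) (hval : IsValuation V)
    (hτ : TauContinuous V) {M : ℝ} (hM : 0 < M)
    (hU : ∀ B : ℝ, ∃ f : Sph n → ℝ, NormBound M f ∧ B < |V f|) (j : ℕ) :
    ∃ (a : ℝ) (g w : Sph n → ℝ) (z : Sph n),
      a ∈ Icc (-M) M ∧
      LipschitzWith (Real.toNNReal (M + 1)) g ∧
      LipschitzWith (Real.toNNReal (1 / ((j:ℝ) + 1))) w ∧
      (∀ y : Sph n, 2 / ((j:ℝ) + 1) ≤ dist y z → g y = w y) ∧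
      (∀ y, a - 2 / ((j:ℝ) + 1) ≤ g y ∧ g y ≤ a + 1 / (((j:ℝ) + 1) ^ 2)) ∧
      (j : ℝ) < |V g| := by
  obtain ⟨J, hJdef⟩ : ∃ J : ℝ, J = (j : ℝ) + 1 := ⟨_, rfl⟩
  have hJ1 : 1 ≤ J := by rw [hJdef]; have : (0:ℝ) ≤ j := Nat.cast_nonneg j; linarith
  have hJ0 : 0 < J := by linarith
  obtain ⟨c₀, hc₀0, hc₀⟩ := vconst_bound hτ M
  obtain ⟨s, hsne, hcov⟩ := sphere_cover hn (1 / J) (by positivity)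
  obtain ⟨m, hm⟩ : ∃ m : ℕ, m = s.card := ⟨_, rfl⟩
  obtain ⟨N, hNdef⟩ : ∃ N : ℕ, N = ⌈2 * M * J ^ 2⌉₊ + 1 := ⟨_, rfl⟩
  have hN0 : 0 < N := by omega
  have hNR : 2 * M * J ^ 2 ≤ (N : ℝ) := by
    have h1 := Nat.le_ceil (2 * M * J ^ 2)
    have h2 : ((⌈2 * M * J ^ 2⌉₊ : ℕ) : ℝ) ≤ (N : ℝ) := by
      rw [hNdef]; push_cast; linarith
    linarith
  have hNne : (N : ℝ) ≠ 0 := Nat.cast_ne_zero.mpr hN0.ne'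
  have hNpos : (0:ℝ) < N := by positivity
  obtain ⟨gap, hgap⟩ : ∃ g : ℝ, g = 2 * M / N := ⟨_, rfl⟩
  have hgap0 : 0 < gap := by rw [hgap]; positivity
  have hgapJ : gap ≤ 1 / J ^ 2 := by
    rw [hgap, div_le_div_iff₀ hNpos (by positivity)]
    nlinarith
  obtain ⟨f, hf, hVf⟩ := hU ((N : ℝ) * (3 ^ m * J + c₀ + 1) + c₀)
  have hfLip : IsLip f := ⟨Real.toNNReal M, hf.2⟩
  obtain ⟨lev, hlev⟩ : ∃ lev : ℕ → ℝ, lev = fun i : ℕ => -M + (i:ℝ) * gap := ⟨_, rfl⟩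
  have hlevIcc : ∀ i : ℕ, i ≤ N → lev i ∈ Icc (-M) M := by
    intro i hi
    have h1 : (i : ℝ) * gap ≤ N * gap := by
      apply mul_le_mul_of_nonneg_right _ hgap0.le
      exact_mod_cast hi
    have h2 : (N : ℝ) * gap = 2 * M := by rw [hgap]; field_simp
    rw [hlev]
    constructor
    · simp only; nlinarith [mul_nonneg (Nat.cast_nonneg i) hgap0.le]
    · simp only; nlinarith
  obtain ⟨φ, hφ⟩ : ∃ φ : ℕ → ℝ, φ = fun i => V (f ⊔ fun _ => lev i) := ⟨_, rfl⟩
  have hφ0 : φ 0 = V f := by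
    simp only [hφ]
    congr 1
    funext x
    rw [hlev]
    simp only [Pi.sup_apply, Nat.cast_zero, zero_mul, add_zero]
    exact max_eq_left (abs_le.mp (hf.1 x)).1
  have hφN : φ N = V (fun _ => M) := by
    simp only [hφ]
    congr 1
    funext x
    have hlN : lev N = M := by rw [hlev]; simp only; rw [hgap]; field_simp; ring
    simp only [Pi.sup_apply, hlN]
    exact max_eq_right (abs_le.mp (hf.1 x)).2
  have hΔ : (N : ℝ) * (3 ^ m * J + c₀ + 1) ≤ |φ N - φ 0| := by
    rw [hφ0, hφN]
    have h1 : |V (fun _ : Sph n => M)| ≤ c₀ := hc₀ M (by constructor <;> linarith)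
    have h2 := abs_sub_abs_le_abs_sub (V f) (V (fun _ : Sph n => M))
    rw [abs_sub_comm (V f)] at h2
    linarith
  obtain ⟨i, hiN, hpig⟩ := pigeonhole φ N hN0 _ hΔ
  rw [mul_div_cancel_left₀ _ hNne] at hpig
  obtain ⟨a, ha⟩ : ∃ a : ℝ, a = lev i := ⟨_, rfl⟩
  obtain ⟨b, hb⟩ : ∃ b : ℝ, b = lev (i + 1) := ⟨_, rfl⟩
  have haIcc : a ∈ Icc (-M) M := ha ▸ hlevIcc i (le_of_lt hiN)
  have hbIcc : b ∈ Icc (-M) M := hb ▸ hlevIcc (i + 1) hiN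
  have hab : b = a + gap := by rw [ha, hb, hlev]; push_cast; ring
  have hab' : a ≤ b := by rw [hab]; linarith
  obtain ⟨h, hh⟩ : ∃ h : Sph n → ℝ, h = (f ⊔ fun _ => a) ⊓ (fun _ => b) := ⟨_, rfl⟩
  have hhfun : h = fun x => min (max (f x) a) b := by
    rw [hh]; funext x
    simp only [Pi.sup_apply, Pi.inf_apply]
  have hhLip : LipschitzWith (Real.toNNReal M) h := by
    rw [hhfun]
    exact (hf.2.max_const a).min_const b
  have hhIsLip : IsLip h := ⟨_, hhLip⟩
  have hhlb : ∀ x, a ≤ h x := by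
    intro x
    rw [hhfun]
    exact le_min (le_max_right _ _) hab'
  have hhub : ∀ x, h x ≤ b := by intro x; rw [hhfun]; exact min_le_right _ _
  have hVh : V h = φ i + V (fun _ : Sph n => b) - φ (i + 1) := by
    have hval' := hval (f ⊔ fun _ => a) (fun _ => b)
      (isLip_sup _ _ hfLip (isLip_const a)) (isLip_const b)
    have hXb : (f ⊔ fun _ : Sph n => a) ⊔ (fun _ => b) = f ⊔ fun _ => b := by
      funext x
      simp only [Pi.sup_apply]
      rw [max_assoc, max_eq_right hab']
    rw [hXb] at hval'
    have e1 : φ i = V (f ⊔ fun _ => lev i) := by simp only [hφ]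
    have e2 : φ (i+1) = V (f ⊔ fun _ => lev (i+1)) := by simp only [hφ]
    rw [e1, e2, ← ha, ← hb, ← hh] at *
    linarith
  have hVhbig : 3 ^ m * J + 1 ≤ |V h| := by
    have h1 : |V (fun _ : Sph n => b)| ≤ c₀ := hc₀ b hbIcc
    have h2 : φ (i+1) - φ i = V (fun _ : Sph n => b) - V h := by rw [hVh]; ring
    have h3 : |φ (i+1) - φ i| ≤ |V (fun _ : Sph n => b)| + |V h| := by
      rw [h2]; exact abs_sub _ _
    linarith
  obtain ⟨lam, hlam⟩ : ∃ lam : ℝ, lam = 1 / J := ⟨_, rfl⟩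
  have hlam0 : 0 < lam := by rw [hlam]; positivity
  obtain ⟨c, hc⟩ : ∃ c : Sph n → Sph n → ℝ,
      c = fun i y => b - lam * max (dist y i - 1 / J) 0 := ⟨_, rfl⟩
  have hcLip : ∀ i, LipschitzWith (Real.toNNReal lam) (c i) := by
    intro i; rw [hc]; exact cone_lip b lam (1 / J) hlam0.le i
  have hcub : ∀ i y, c i y ≤ b := by
    intro i y
    rw [hc]
    simp only
    have h1 : 0 ≤ lam * max (dist y i - 1/J) 0 :=
      mul_nonneg hlam0.le (le_max_right _ _)
    linarith
  have hclb : ∀ i y, b - 2 * lam ≤ c i y := by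
    intro i y
    have h1 : max (dist y i - 1/J) 0 ≤ 2 := by
      apply max_le _ (by norm_num)
      have h2 : (0:ℝ) < 1/J := by positivity
      linarith [coe_dist_le_two y i]
    rw [hc]
    simp only
    have h2 : lam * max (dist y i - 1/J) 0 ≤ lam * 2 :=
      mul_le_mul_of_nonneg_left h1 hlam0.le
    linarith
  obtain ⟨u, hu⟩ : ∃ u : Sph n → Sph n → ℝ, u = fun i => h ⊓ c i := ⟨_, rfl⟩
  have huIsLip : ∀ i ∈ s, IsLip (u i) := by
    intro i _; rw [hu]; exact isLip_inf _ _ hhIsLip ⟨_, hcLip i⟩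
  have hsup : s.sup' hsne u = h := by
    funext y
    rw [Finset.sup'_apply]
    apply le_antisymm
    · apply Finset.sup'_le
      intro i _
      rw [hu]
      simp only [Pi.inf_apply]
      exact min_le_left _ _
    · obtain ⟨i, his, hdi⟩ := hcov y
      have h1 : c i y = b := by
        rw [hc]
        simp only
        have : max (dist y i - 1/J) 0 = 0 := max_eq_right (by linarith)
        rw [this]; ring
      have h2 : u i y = h y := by
        rw [hu]
        simp only [Pi.inf_apply, h1]
        exact min_eq_left (hhub y)
      calc h y = u i y := h2.symm
      _ ≤ _ := Finset.le_sup' (fun i => u i y) his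
  have hIE : ¬ (∀ t : Finset (Sph n), t ⊆ s → ∀ ht : t.Nonempty, |V (t.inf' ht u)| ≤ J) := by
    intro hall
    have hie := ie_bound V hval s hsne u huIsLip J (by positivity) hall
    rw [hsup, ← hm] at hie
    have h3m : (0:ℝ) < 3 ^ m := by positivity
    linarith
  push_neg at hIE
  obtain ⟨tt, htts, htt, httbig⟩ := hIE
  obtain ⟨w, hw⟩ : ∃ w : Sph n → ℝ, w = tt.inf' htt c := ⟨_, rfl⟩
  have hgw : tt.inf' htt u = h ⊓ w := by
    rw [hw, hu, ← inf_inf'_distrib tt htt c h]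
  obtain ⟨g, hg⟩ : ∃ g : Sph n → ℝ, g = h ⊓ w := ⟨_, rfl⟩
  rw [hgw, ← hg] at httbig
  obtain ⟨z, hz⟩ := htt
  have hwLip : LipschitzWith (Real.toNNReal lam) w := by
    rw [hw]
    apply lipschitzWith_inf'_same
    intro i _
    exact hcLip i
  have hwub : ∀ y, w y ≤ c z y := by
    intro y
    rw [hw]
    exact Finset.inf'_le c hz y
  have hwlb : ∀ y, b - 2 * lam ≤ w y := by
    intro y
    have e : w y = tt.inf' ⟨z, hz⟩ (fun i => c i y) := by
      rw [hw]; exact Finset.inf'_apply _ _ _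
    rw [e]
    apply Finset.le_inf'
    intro i _
    exact hclb i y
  have hglb : ∀ y, a - 2 / J ≤ g y := by
    intro y
    rw [hg]
    simp only [Pi.inf_apply]
    apply le_min
    · have := hhlb y
      have h2 : 0 < 2 / J := by positivity
      linarith
    · have h1 := hwlb y
      rw [hab] at h1
      rw [hlam] at h1
      have : 2 * (1/J) = 2 / J := by ring
      rw [this] at h1
      linarith
  have hgub : ∀ y, g y ≤ a + 1 / J ^ 2 := by
    intro y
    rw [hg]
    simp only [Pi.inf_apply]
    calc min (h y) (w y) ≤ h y := min_le_left _ _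
    _ ≤ b := hhub y
    _ ≤ a + 1 / J ^ 2 := by rw [hab]; linarith
  have hgLip : LipschitzWith (Real.toNNReal (M + 1)) g := by
    rw [hg]
    have h1 : LipschitzWith (Real.toNNReal (M+1)) h :=
      hhLip.weaken (Real.toNNReal_le_toNNReal (by linarith))
    have h2 : LipschitzWith (Real.toNNReal (M+1)) w := by
      apply hwLip.weaken
      apply Real.toNNReal_le_toNNReal
      have hl1 : lam ≤ 1 := by rw [hlam, div_le_one hJ0]; exact hJ1
      linarith
    exact lipschitzWith_inf_same _ _ h1 h2
  have hout : ∀ y : Sph n, 2 / J ≤ dist y z → g y = w y := by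
    intro y hy
    have h1 : c z y ≤ a := by
      have hd : 1 / J ≤ dist y z - 1 / J := by
        have h2J : 2 / J = 1/J + 1/J := by ring
        rw [h2J] at hy
        linarith
      have hmax : max (dist y z - 1/J) 0 = dist y z - 1/J := by
        apply max_eq_left
        have : (0:ℝ) < 1/J := by positivity
        linarith
      rw [hc]
      simp only [hmax]
      have h3 : lam * (1/J) ≤ lam * (dist y z - 1/J) :=
        mul_le_mul_of_nonneg_left hd hlam0.le
      have h4 : lam * (1/J) = 1 / J ^ 2 := by rw [hlam]; ring
      have h5 : b ≤ a + 1 / J ^ 2 := by rw [hab]; linarith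
      linarith
    have h2 : w y ≤ h y := le_trans (hwub y) (h1.trans (hhlb y))
    rw [hg]
    simp only [Pi.inf_apply]
    exact min_eq_right h2
  have hVgbig : (j : ℝ) < |V g| := by
    have : (j : ℝ) < J := by rw [hJdef]; linarith
    linarith
  refine ⟨a, g, w, z, haIcc, hgLip, ?_, ?_, fun y => ⟨?_, ?_⟩, hVgbig⟩
  · rw [← hJdef, ← hlam]; exact hwLip
  · rw [← hJdef]; exact hout
  · rw [← hJdef]; exact (hglb y)
  · rw [← hJdef]; exact (hgub y)

lemma eucl_one_norm (u : Eucl 1) : ‖u‖ = |u 0| := by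
  rw [EuclideanSpace.norm_eq]
  simp [Real.norm_eq_abs, sq_abs, Real.sqrt_sq_eq_abs]

lemma eucl_one_unit_eq {u v : Eucl 1} (hu : ‖u‖ = 1) (hv : ‖v‖ = 1) (h : ‖u - v‖ < 2) :
    u = v := by
  have hu0 : |u 0| = 1 := by rw [← eucl_one_norm]; exact hu
  have hv0 : |v 0| = 1 := by rw [← eucl_one_norm]; exact hv
  have hsub : ‖u - v‖ = |u 0 - v 0| := by
    rw [eucl_one_norm]
    congr 1
  rw [hsub] at h
  have huv : u 0 = v 0 := by
    rcases (abs_eq (by norm_num : (0:ℝ) ≤ 1)).mp hu0 with h1 | h1 <;>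
    rcases (abs_eq (by norm_num : (0:ℝ) ≤ 1)).mp hv0 with h2 | h2 <;>
      rw [h1, h2] at h ⊢ <;> first | rfl | (exfalso; rw [show (1:ℝ) - -1 = 2 by norm_num] at h <;> simp_all) | (exfalso; norm_num at h)
  ext i
  have hi : i = 0 := Subsingleton.elim i 0
  rw [hi]; exact huv

lemma sphGrad_dim_one (f : Sph 1 → ℝ) (x : Sph 1) : sphGrad f ((x : Eucl 1)) = 0 := by
  have hev : homExt f =ᶠ[𝓝 (x : Eucl 1)] (fun _ => f x) := by
    filter_upwards [Metric.ball_mem_nhds (x : Eucl 1) (by norm_num : (0:ℝ) < 1/2)] with y hy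
    rw [Metric.mem_ball, dist_eq_norm] at hy
    have h12 : (1:ℝ)/2 < ‖y‖ := norm_pos_of_near hy
    have hy0 : y ≠ 0 := by intro h0; rw [h0, norm_zero] at h12; linarith
    rw [homExt_apply hy0]
    congr 1
    apply Subtype.ext
    show ‖y‖⁻¹ • y = (x : Eucl 1)
    have hnorm1 : ‖‖y‖⁻¹ • y‖ = 1 := by
      rw [norm_smul, norm_inv, norm_norm]
      exact inv_mul_cancel₀ (by positivity)
    apply eucl_one_unit_eq hnorm1 (norm_coe x)
    calc ‖‖y‖⁻¹ • y - (x : Eucl 1)‖ ≤ 2 * ‖y - (x : Eucl 1)‖ := dist_normalize_le hy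
    _ < 2 := by linarith
  rw [sphGrad, hev.gradient_eq, gradient_fun_const]

end TauVal

/-- a τ-continuous valuation on `Lip(S^{n-1})` is bounded on
`‖·‖`-bounded sets. -/
theorem tau_continuous_valuation_bounded_on_bounded {n : ℕ} (hn : 1 ≤ n)
    (V : (Sph n → ℝ) → ℝ) (hval : IsValuation V) (hτ : TauContinuous V) :
    ∀ M : ℝ, 0 < M → ∃ B : ℝ, ∀ f : Sph n → ℝ, NormBound M f → |V f| ≤ B := by
  intro M hM
  by_contra hcon
  push_neg at hcon
  have hU : ∀ B : ℝ, ∃ f : Sph n → ℝ, NormBound M f ∧ B < |V f| := hcon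
  choose A G W Z h1 h2 h3 h4 h5 h6 using
    fun j => TauVal.key_construction hn V hval hτ hM hU j
  -- compact subsequences
  haveI : CompactSpace (Sph n) :=
    isCompact_iff_compactSpace.mp (isCompact_sphere (0 : Eucl n) 1)
  obtain ⟨zL, _, σ₁, hσ₁mono, hσ₁tendsto⟩ :=
    isCompact_univ.tendsto_subseq (x := Z) (fun k => mem_univ _)
  obtain ⟨t₀, _, σ₂, hσ₂mono, hσ₂tendsto⟩ :=
    tendsto_subseq_of_bounded (Metric.isBounded_Icc (-M) M) (fun k => h1 (σ₁ k))
  have hσmono : StrictMono (σ₁ ∘ σ₂) := hσ₁mono.comp hσ₂mono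
  obtain ⟨σ, hσdef⟩ : ∃ σ : ℕ → ℕ, σ = σ₁ ∘ σ₂ := ⟨_, rfl⟩
  have hσm : StrictMono σ := hσdef ▸ hσmono
  have hσk : ∀ k : ℕ, (k : ℝ) ≤ (σ k : ℝ) := fun k => Nat.cast_le.mpr hσm.le_apply
  have hzt : Tendsto (fun k => Z (σ k)) atTop (𝓝 zL) := by
    rw [hσdef]; exact hσ₁tendsto.comp hσ₂mono.tendsto_atTop
  have hat : Tendsto (fun k => A (σ k)) atTop (𝓝 t₀) := by
    rw [hσdef]; exact hσ₂tendsto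
  -- rate sequences
  have hrate : Tendsto (fun k : ℕ => 2 / ((k : ℝ) + 1)) atTop (𝓝 0) := by
    have h0 : Tendsto (fun k : ℕ => ((k : ℝ) + 1)) atTop atTop :=
      tendsto_atTop_add_const_right _ 1 tendsto_natCast_atTop_atTop
    have := h0.inv_tendsto_atTop
    have h2 : Tendsto (fun k : ℕ => 2 * ((k : ℝ) + 1)⁻¹) atTop (𝓝 (2 * 0)) :=
      tendsto_const_nhds.mul this
    rw [mul_zero] at h2
    exact h2.congr (fun k => by rw [div_eq_mul_inv])
  have hrateσ : ∀ k, 2 / ((σ k : ℝ) + 1) ≤ 2 / ((k : ℝ) + 1) := by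
    intro k
    apply div_le_div_of_nonneg_left (by norm_num) (by positivity)
    linarith [hσk k]
  have hrateσ0 : Tendsto (fun k : ℕ => 2 / ((σ k : ℝ) + 1)) atTop (𝓝 0) := by
    apply squeeze_zero (fun k => by positivity) hrateσ hrate
  -- the sequence and its limit
  obtain ⟨Gs, hGs⟩ : ∃ Gs : ℕ → Sph n → ℝ, Gs = fun k => G (σ k) := ⟨_, rfl⟩
  obtain ⟨F, hF⟩ : ∃ F : Sph n → ℝ, F = fun _ => t₀ := ⟨_, rfl⟩
  have hGsL : ∀ k, LipschitzWith (Real.toNNReal (M+1)) (Gs k) := by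
    intro k; rw [hGs]; exact h2 (σ k)
  have hGsLip : ∀ k, IsLip (Gs k) := fun k => ⟨_, hGsL k⟩
  have hFLip : IsLip F := ⟨0, by rw [hF]; exact LipschitzWith.const t₀⟩
  -- uniform bound on |Gs k x - t₀|
  have hubnd : ∀ k x, |F x - Gs k x| ≤ |A (σ k) - t₀| + 2 / ((σ k : ℝ) + 1) := by
    intro k x
    obtain ⟨hlo, hhi⟩ := h5 (σ k) x
    have hJ1 : (1:ℝ) ≤ (σ k : ℝ) + 1 := by
      have h := hσk k
      have h0 : (0:ℝ) ≤ (k:ℝ) := Nat.cast_nonneg k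
      linarith
    have hsq : 1 / ((σ k : ℝ) + 1) ^ 2 ≤ 2 / ((σ k : ℝ) + 1) := by
      rw [div_le_div_iff₀ (by positivity) (by positivity)]
      nlinarith
    rw [hGs, hF]
    simp only
    rw [abs_sub_comm]
    rw [abs_le]
    constructor
    · have hAlow : -(|A (σ k) - t₀|) ≤ A (σ k) - t₀ := neg_abs_le _
      linarith [hlo]
    · have hAhigh : A (σ k) - t₀ ≤ |A (σ k) - t₀| := le_abs_self _
      linarith [hhi, hsq]
  have hbnd0 : Tendsto (fun k => |A (σ k) - t₀| + 2 / ((σ k : ℝ) + 1)) atTop (𝓝 0) := by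
    have h1' : Tendsto (fun k => |A (σ k) - t₀|) atTop (𝓝 0) := by
      have := hat.sub (tendsto_const_nhds (x := t₀))
      rw [sub_self] at this
      have habs := this.abs
      rwa [abs_zero] at habs
    have := h1'.add hrateσ0
    rwa [add_zero] at this
  have hunif : TendstoUniformly Gs F atTop := by
    rw [Metric.tendstoUniformly_iff]
    intro ε hε
    have hev := Metric.tendsto_nhds.mp hbnd0 ε hε
    filter_upwards [hev] with k hk x
    rw [Real.dist_eq, sub_zero] at hk
    have hb := hubnd k x
    have hpos : (0:ℝ) ≤ |A (σ k) - t₀| + 2 / ((σ k : ℝ) + 1) := by positivity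
    rw [abs_of_nonneg hpos] at hk
    rw [Real.dist_eq]
    linarith
  -- gradient bound
  have hMpos : (0:ℝ) ≤ M + 1 := by linarith
  have hgradbnd : ∀ k, ∀ᵐ (x : Sph n) ∂(sphMeasure n),
      ‖sphGrad (Gs k) (x : Eucl n)‖ ≤ 2 * (M + 1) := by
    intro k
    apply Filter.Eventually.of_forall
    intro x
    have := TauVal.sphGrad_norm_le (hGsL k) x
    rwa [Real.coe_toNNReal _ hMpos] at this
  -- gradient convergence off zL
  have hFgrad : ∀ x : Sph n, sphGrad F (x : Eucl n) = 0 := by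
    intro x; rw [hF]; exact TauVal.sphGrad_const t₀ x
  have hptwise : ∀ x : Sph n, x ≠ zL →
      Tendsto (fun k => sphGrad (Gs k) (x : Eucl n)) atTop (𝓝 (sphGrad F (x : Eucl n))) := by
    intro x hx
    rw [hFgrad x]
    have hδ : 0 < dist x zL := dist_pos.mpr hx
    obtain ⟨δ, hδdef⟩ : ∃ δ : ℝ, δ = dist x zL := ⟨_, rfl⟩
    have hδ0 : 0 < δ := hδdef ▸ hδ
    have hev1 : ∀ᶠ k in atTop, dist (Z (σ k)) zL < δ / 4 :=
      Metric.tendsto_nhds.mp hzt (δ / 4) (by positivity)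
    have hev2 : ∀ᶠ k in atTop, 2 / ((σ k : ℝ) + 1) < δ / 4 := by
      have := Metric.tendsto_nhds.mp hrateσ0 (δ / 4) (by positivity)
      filter_upwards [this] with k hk
      rw [Real.dist_eq, sub_zero, abs_of_nonneg (by positivity : (0:ℝ) ≤ 2 / ((σ k:ℝ)+1))] at hk
      exact hk
    have hkey : ∀ᶠ k in atTop, ‖sphGrad (Gs k) (x : Eucl n)‖ ≤ 2 / ((k : ℝ) + 1) := by
      filter_upwards [hev1, hev2] with k hk1 hk2
      have hloc : ∀ y : Sph n, dist (y : Eucl n) (x : Eucl n) < δ / 4 → Gs k y = W (σ k) y := by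
        intro y hy
        rw [hGs]
        simp only
        apply h4 (σ k) y
        have hyx : dist y x < δ / 4 := by rwa [Subtype.dist_eq]
        have htri : dist x zL ≤ dist x y + dist y (Z (σ k)) + dist (Z (σ k)) zL := by
          calc dist x zL ≤ dist x (Z (σ k)) + dist (Z (σ k)) zL := dist_triangle _ _ _
          _ ≤ dist x y + dist y (Z (σ k)) + dist (Z (σ k)) zL := by
              linarith [dist_triangle x y (Z (σ k))]
        rw [← hδdef] at htri
        rw [dist_comm x y] at htri
        have : δ / 2 ≤ dist y (Z (σ k)) := by linarith
        linarith
      have hcongr : sphGrad (Gs k) (x : Eucl n) = sphGrad (W (σ k)) (x : Eucl n) :=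
        TauVal.sphGrad_congr x (by positivity : (0:ℝ) < δ/4) hloc
      rw [hcongr]
      have hb := TauVal.sphGrad_norm_le (h3 (σ k)) x
      have hc : (Real.toNNReal (1 / ((σ k : ℝ) + 1)) : ℝ) = 1 / ((σ k : ℝ) + 1) :=
        Real.coe_toNNReal _ (by positivity)
      rw [hc] at hb
      calc ‖sphGrad (W (σ k)) (x : Eucl n)‖ ≤ 2 * (1 / ((σ k : ℝ) + 1)) := hb
      _ = 2 / ((σ k : ℝ) + 1) := by ring
      _ ≤ 2 / ((k : ℝ) + 1) := hrateσ k
    exact squeeze_zero_norm' hkey hrate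
  have hgradconv : ∀ᵐ (x : Sph n) ∂(sphMeasure n),
      Tendsto (fun k => sphGrad (Gs k) (x : Eucl n)) atTop (𝓝 (sphGrad F (x : Eucl n))) := by
    rcases eq_or_lt_of_le hn with hn1 | hn2
    · -- n = 1
      apply Filter.Eventually.of_forall
      intro x
      subst hn1
      rw [hFgrad x]
      have hz : ∀ k, sphGrad (Gs k) (x : Eucl 1) = 0 := fun k =>
        TauVal.sphGrad_dim_one (Gs k) x
      simp only [hz]
      exact tendsto_const_nhds
    · -- n ≥ 2
      have hd : (0:ℝ) < (n : ℝ) - 1 := by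
        have : (2:ℝ) ≤ (n:ℝ) := by exact_mod_cast hn2
        linarith
      haveI := MeasureTheory.Measure.noAtoms_hausdorff (Sph n) hd
      have hnull : sphMeasure n {zL} = 0 := by
        rw [sphMeasure, Measure.smul_apply, measure_singleton, smul_eq_mul, mul_zero]
      rw [ae_iff]
      apply measure_mono_null _ hnull
      intro x hx
      simp only [mem_setOf_eq] at hx
      by_contra hxz
      exact hx (hptwise x (by simpa using hxz))
  -- apply τ-continuity
  have hlim := hτ Gs F hGsLip hFLip ⟨hunif, ⟨2 * (M + 1), hgradbnd⟩, hgradconv⟩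
  rw [Metric.tendsto_atTop] at hlim
  obtain ⟨k₀, hk₀⟩ := hlim 1 one_pos
  obtain ⟨k, hk1, hk2⟩ : ∃ k, k₀ ≤ k ∧ |V F| + 1 ≤ (k : ℝ) := by
    refine ⟨max k₀ (⌈|V F| + 1⌉₊), le_max_left _ _, ?_⟩
    calc |V F| + 1 ≤ (⌈|V F| + 1⌉₊ : ℝ) := Nat.le_ceil _
    _ ≤ ((max k₀ ⌈|V F| + 1⌉₊ : ℕ) : ℝ) := by exact_mod_cast le_max_right _ _
  have hdist := hk₀ k hk1
  rw [Real.dist_eq] at hdist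
  have habs : |V (Gs k)| < |V F| + 1 := by
    have := abs_sub_abs_le_abs_sub (V (Gs k)) (V F)
    linarith
  have hbig : (σ k : ℝ) < |V (Gs k)| := by
    rw [hGs]; exact h6 (σ k)
  linarith [hσk k]
end
end

section
/- Let V: Lip(S^{n-1}) → ℝ be a τ-continuous valuation, let A, B ⊂ S^{n-1} be Borel sets, λ ∈ ℝ and γ ≥ 0. Then lim_{ω → 0⁺} sup{|V(f + λ) − V(λ)| : supp(f) ⊂ A^ω ∪ B^ω, L(f) ≤ γ} = 0. -/
open MeasureTheory Metric Set Filter Topology Classical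
open scoped ENNReal NNReal

noncomputable section

/-- The outer parallel band `A^ω = {t ∈ S^{n-1} : 0 < d(t, A) < ω}`. -/
def band {n : ℕ} (A : Set (Sph n)) (ω : ℝ) : Set (Sph n) :=
  {t : Sph n | 0 < Metric.infDist t A ∧ Metric.infDist t A < ω}


section Aux

variable {n : ℕ}

lemma sph_norm (x : Sph n) : ‖(x : Eucl n)‖ = 1 :=
  mem_sphere_zero_iff_norm.mp x.2

lemma sph_ne_zero (x : Sph n) : (x : Eucl n) ≠ 0 := by
  intro h
  have := sph_norm x
  rw [h, norm_zero] at this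
  norm_num at this

lemma homExt_apply {f : Sph n → ℝ} {y : Eucl n} (hy : y ≠ 0)
    (h : ‖y‖⁻¹ • y ∈ Sph n) : homExt f y = f ⟨‖y‖⁻¹ • y, h⟩ := by
  rw [homExt, dif_neg hy]

lemma normalize_sub_le (x y : Eucl n) (hx : (1:ℝ)/2 ≤ ‖x‖) (hy : (1:ℝ)/2 ≤ ‖y‖) :
    ‖‖x‖⁻¹ • x - ‖y‖⁻¹ • y‖ ≤ 4 * ‖x - y‖ := by
  have hx0 : (0:ℝ) < ‖x‖ := lt_of_lt_of_le (by norm_num) hx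
  have hy0 : (0:ℝ) < ‖y‖ := lt_of_lt_of_le (by norm_num) hy
  have hrw : ‖x‖⁻¹ • x - ‖y‖⁻¹ • y = ‖x‖⁻¹ • (x - y) + (‖x‖⁻¹ - ‖y‖⁻¹) • y := by
    rw [smul_sub, sub_smul]; abel
  have hxinv : ‖x‖⁻¹ ≤ 2 := by
    rw [inv_le_comm₀ hx0 (by norm_num : (0:ℝ) < 2)]
    linarith
  have h1 : ‖‖x‖⁻¹ • (x - y)‖ ≤ 2 * ‖x - y‖ := by
    rw [norm_smul, norm_inv, norm_norm]
    exact mul_le_mul_of_nonneg_right hxinv (norm_nonneg _)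
  have h2 : ‖(‖x‖⁻¹ - ‖y‖⁻¹) • y‖ ≤ 2 * ‖x - y‖ := by
    rw [norm_smul, Real.norm_eq_abs]
    have hdiff : ‖x‖⁻¹ - ‖y‖⁻¹ = (‖y‖ - ‖x‖) * (‖x‖⁻¹ * ‖y‖⁻¹) := by
      field_simp
    rw [hdiff, abs_mul, abs_of_nonneg (by positivity : (0:ℝ) ≤ ‖x‖⁻¹ * ‖y‖⁻¹)]
    have habs : |‖y‖ - ‖x‖| ≤ ‖x - y‖ := by
      rw [norm_sub_rev]
      exact abs_norm_sub_norm_le y x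
    have : |‖y‖ - ‖x‖| * (‖x‖⁻¹ * ‖y‖⁻¹) * ‖y‖ = |‖y‖ - ‖x‖| * ‖x‖⁻¹ := by
      field_simp
    rw [this]
    calc |‖y‖ - ‖x‖| * ‖x‖⁻¹ ≤ ‖x - y‖ * 2 :=
          mul_le_mul habs hxinv (by positivity) (norm_nonneg _)
      _ = 2 * ‖x - y‖ := by ring
  calc ‖‖x‖⁻¹ • x - ‖y‖⁻¹ • y‖ = ‖‖x‖⁻¹ • (x - y) + (‖x‖⁻¹ - ‖y‖⁻¹) • y‖ := by rw [hrw]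
    _ ≤ ‖‖x‖⁻¹ • (x - y)‖ + ‖(‖x‖⁻¹ - ‖y‖⁻¹) • y‖ := norm_add_le _ _
    _ ≤ 2 * ‖x - y‖ + 2 * ‖x - y‖ := add_le_add h1 h2
    _ = 4 * ‖x - y‖ := by ring

lemma homExt_lipschitzOn {f : Sph n → ℝ} {K : ℝ≥0} (hf : LipschitzWith K f) :
    LipschitzOnWith (4 * K) (homExt f) {y : Eucl n | (1:ℝ)/2 ≤ ‖y‖} := by
  rw [lipschitzOnWith_iff_dist_le_mul]
  intro x hx y hy
  have hx0 : x ≠ 0 := by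
    intro h; rw [h] at hx; norm_num [Set.mem_setOf_eq] at hx
  have hy0 : y ≠ 0 := by
    intro h; rw [h] at hy; norm_num [Set.mem_setOf_eq] at hy
  have hxm : ‖x‖⁻¹ • x ∈ Sph n := by
    simp [mem_sphere_zero_iff_norm, norm_smul, norm_inv,
      inv_mul_cancel₀ (norm_ne_zero_iff.mpr hx0)]
  have hym : ‖y‖⁻¹ • y ∈ Sph n := by
    simp [mem_sphere_zero_iff_norm, norm_smul, norm_inv,
      inv_mul_cancel₀ (norm_ne_zero_iff.mpr hy0)]
  rw [homExt_apply hx0 hxm, homExt_apply hy0 hym]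
  calc dist (f ⟨‖x‖⁻¹ • x, hxm⟩) (f ⟨‖y‖⁻¹ • y, hym⟩)
      ≤ K * dist (⟨‖x‖⁻¹ • x, hxm⟩ : Sph n) (⟨‖y‖⁻¹ • y, hym⟩ : Sph n) :=
        hf.dist_le_mul _ _
    _ = K * ‖‖x‖⁻¹ • x - ‖y‖⁻¹ • y‖ := by rw [Subtype.dist_eq, dist_eq_norm]
    _ ≤ K * (4 * ‖x - y‖) :=
        mul_le_mul_of_nonneg_left (normalize_sub_le x y hx hy) K.coe_nonneg
    _ = (4 * K : ℝ≥0) * dist x y := by rw [dist_eq_norm]; push_cast; ring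

lemma norm_sphGrad_le {f : Sph n → ℝ} {K : ℝ≥0} (hf : LipschitzWith K f) (x : Sph n) :
    ‖sphGrad f (x : Eucl n)‖ ≤ 4 * K := by
  have hopen : IsOpen {y : Eucl n | (1:ℝ)/2 < ‖y‖} := isOpen_lt continuous_const continuous_norm
  have hmem : {y : Eucl n | (1:ℝ)/2 ≤ ‖y‖} ∈ 𝓝 (x : Eucl n) := by
    refine mem_of_superset (hopen.mem_nhds ?_) (fun y hy => le_of_lt (Set.mem_setOf_eq ▸ hy))
    simp only [Set.mem_setOf_eq, sph_norm x]; norm_num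
  have hb := norm_fderiv_le_of_lipschitzOn ℝ hmem (homExt_lipschitzOn hf)
  calc ‖sphGrad f (x : Eucl n)‖ = ‖fderiv ℝ (homExt f) (x : Eucl n)‖ := by
        rw [sphGrad, gradient]; exact LinearIsometryEquiv.norm_map _ _
    _ ≤ ((4 * K : ℝ≥0) : ℝ) := hb
    _ = 4 * K := by push_cast; ring

lemma sphGrad_add_const (f : Sph n → ℝ) (c : ℝ) (x : Sph n) :
    sphGrad (f + fun _ => c) (x : Eucl n) = sphGrad f (x : Eucl n) := by
  have hev : homExt (f + fun _ => c) =ᶠ[𝓝 (x : Eucl n)] fun y => homExt f y + c := by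
    filter_upwards [eventually_ne_nhds (sph_ne_zero x)] with y hy
    rw [homExt, homExt, dif_neg hy, dif_neg hy]
    rfl
  rw [sphGrad, sphGrad, gradient, gradient, hev.fderiv_eq, fderiv_add_const]

lemma sphGrad_const (c : ℝ) (x : Sph n) :
    sphGrad (fun _ : Sph n => c) (x : Eucl n) = 0 := by
  have hev : homExt (fun _ : Sph n => c) =ᶠ[𝓝 (x : Eucl n)] fun _ => c := by
    filter_upwards [eventually_ne_nhds (sph_ne_zero x)] with y hy
    rw [homExt, dif_neg hy]
  rw [sphGrad, hev.gradient_eq]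
  exact gradient_const ..

instance : CompactSpace (Sph n) := isCompact_iff_compactSpace.mp (isCompact_sphere 0 1)

lemma sphGrad_eq_zero_of_not_mem_tsupport (f : Sph n → ℝ) (x : Sph n)
    (hx : x ∉ tsupport f) : sphGrad f (x : Eucl n) = 0 := by
  set T : Set (Eucl n) := Subtype.val '' tsupport f with hT
  have hTclosed : IsClosed T :=
    (((isClosed_tsupport f).isCompact).image continuous_subtype_val).isClosed
  have hxT : (x : Eucl n) ∉ T := by
    rintro ⟨z, hz, hzx⟩
    exact hx (Subtype.coe_injective hzx ▸ hz)
  have hcont : ContinuousAt (fun y : Eucl n => ‖y‖⁻¹ • y) (x : Eucl n) :=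
    ((continuous_norm.continuousAt).inv₀
      (norm_ne_zero_iff.mpr (sph_ne_zero x))).smul continuousAt_id
  have hself : ‖(x : Eucl n)‖⁻¹ • (x : Eucl n) = (x : Eucl n) := by
    rw [sph_norm x, inv_one, one_smul]
  have h1 : ∀ᶠ y in 𝓝 (x : Eucl n), ‖y‖⁻¹ • y ∈ Tᶜ :=
    hcont.eventually_mem (hTclosed.isOpen_compl.mem_nhds (by rw [hself]; exact hxT))
  have hev : homExt f =ᶠ[𝓝 (x : Eucl n)] fun _ => (0:ℝ) := by
    filter_upwards [h1, eventually_ne_nhds (sph_ne_zero x)] with y hy1 hy0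
    have hym : ‖y‖⁻¹ • y ∈ Sph n := by
      simp [mem_sphere_zero_iff_norm, norm_smul, norm_inv,
        inv_mul_cancel₀ (norm_ne_zero_iff.mpr hy0)]
    rw [homExt_apply hy0 hym]
    apply image_eq_zero_of_notMem_tsupport
    intro hmem
    exact hy1 ⟨_, hmem, rfl⟩
  rw [sphGrad, hev.gradient_eq]
  exact gradient_const ..

end Aux

/-- for a τ-continuous valuation `V`, Borel sets `A, B ⊆ S^{n-1}`, `λ ∈ ℝ`
and `γ ≥ 0`, `sup {|V(f+λ) − V(λ)| : supp f ⊆ A^ω ∪ B^ω, L(f) ≤ γ} → 0` as `ω → 0⁺`. -/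
theorem sup_over_outer_bands_tendsto_zero {n : ℕ} (hn : 1 ≤ n) (V : (Sph n → ℝ) → ℝ)
    (hval : IsValuation V) (hτ : TauContinuous V)
    (A B : Set (Sph n)) (hA : MeasurableSet A) (hB : MeasurableSet B)
    (lam : ℝ) (γ : ℝ≥0) :
    Tendsto (fun ω : ℝ =>
        ⨆ f : {f : Sph n → ℝ // tsupport f ⊆ band A ω ∪ band B ω ∧ LipschitzWith γ f},
          |V ((f : Sph n → ℝ) + fun _ => lam) - V (fun _ => lam)|)
      (𝓝[>] 0) (𝓝 0) := by
  have homega : Tendsto (fun k : ℕ => 1 / ((k : ℝ) + 1)) atTop (𝓝 0) :=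
    tendsto_one_div_add_atTop_nhds_zero_nat
  rw [Metric.tendsto_nhdsWithin_nhds]
  intro ε hε
  have claim : ∃ δ > (0:ℝ), ∀ f : Sph n → ℝ,
      tsupport f ⊆ band A δ ∪ band B δ → LipschitzWith γ f →
      |V (f + fun _ => lam) - V (fun _ => lam)| ≤ ε / 2 := by
    by_contra hcon
    push_neg at hcon
    have hex : ∀ k : ℕ, ∃ f : Sph n → ℝ,
        tsupport f ⊆ band A (1 / ((k : ℝ) + 1)) ∪ band B (1 / ((k : ℝ) + 1)) ∧
        LipschitzWith γ f ∧ ε / 2 < |V (f + fun _ => lam) - V (fun _ => lam)| := by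
      intro k
      obtain ⟨f, h1, h2, h3⟩ := hcon (1 / ((k : ℝ) + 1)) (by positivity)
      exact ⟨f, h1, h2, h3⟩
    choose F hsupp hlip hbig using hex
    have hev : ∀ x : Sph n, ∀ᶠ k : ℕ in atTop,
        x ∉ band A (1 / ((k : ℝ) + 1)) ∪ band B (1 / ((k : ℝ) + 1)) := by
      intro x
      have hband : ∀ C : Set (Sph n), ∀ᶠ k : ℕ in atTop,
          x ∉ band C (1 / ((k : ℝ) + 1)) := by
        intro C
        rcases le_or_gt (Metric.infDist x C) 0 with h | h
        · exact Eventually.of_forall fun k hk => absurd hk.1 (not_lt.mpr h)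
        · filter_upwards [homega.eventually_lt_const h] with k hk hmem
          exact absurd hmem.2 (not_lt.mpr hk.le)
      filter_upwards [hband A, hband B] with k hA' hB' hmem
      exact hmem.elim hA' hB'
    have hzero : ∀ x : Sph n, ∀ᶠ k : ℕ in atTop, x ∉ tsupport (F k) := by
      intro x
      filter_upwards [hev x] with k hk hmem
      exact hk (hsupp k hmem)
    have huc : TendstoUniformly F 0 atTop := by
      rw [Metric.tendstoUniformly_iff]
      intro η hη
      set r : ℝ := η / (2 * ((γ : ℝ) + 1)) with hr
      have hrpos : 0 < r := by positivity
      have hcov : (Set.univ : Set (Sph n)) ⊆ ⋃ x : Sph n, Metric.ball x r := fun x _ =>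
        Set.mem_iUnion.2 ⟨x, Metric.mem_ball_self hrpos⟩
      obtain ⟨t, ht⟩ := isCompact_univ.elim_finite_subcover
        (fun x : Sph n => Metric.ball x r) (fun _ => Metric.isOpen_ball) hcov
      have hNx : ∀ x : Sph n, ∃ N : ℕ, ∀ k ≥ N, x ∉ tsupport (F k) := fun x =>
        eventually_atTop.mp (hzero x)
      choose Nf hNf using hNx
      refine eventually_atTop.2 ⟨t.sup Nf, fun k hk x => ?_⟩
      obtain ⟨c, hct, hxc⟩ : ∃ c ∈ t, x ∈ Metric.ball c r := by
        simpa using ht (Set.mem_univ x)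
      have hFc : F k c = 0 :=
        image_eq_zero_of_notMem_tsupport (hNf c k (le_trans (Finset.le_sup hct) hk))
      have hkey : (γ : ℝ) * r < η := by
        have h2 : (0:ℝ) < 2 * ((γ : ℝ) + 1) := by positivity
        calc (γ : ℝ) * r = η * ((γ : ℝ) / (2 * ((γ : ℝ) + 1))) := by rw [hr]; ring
          _ < η * 1 := by
              refine mul_lt_mul_of_pos_left ?_ hη
              rw [div_lt_one h2]
              have := γ.coe_nonneg
              linarith
          _ = η := mul_one η
      calc dist ((0 : Sph n → ℝ) x) (F k x) = dist (F k x) (F k c) := by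
            simp only [Pi.zero_apply, hFc, dist_comm]
        _ ≤ (γ : ℝ) * dist x c := (hlip k).dist_le_mul x c
        _ ≤ (γ : ℝ) * r := by
            refine mul_le_mul_of_nonneg_left ?_ γ.coe_nonneg
            exact le_of_lt (Metric.mem_ball.mp hxc)
        _ < η := hkey
    have hucg : TendstoUniformly (fun k => F k + fun _ => lam) (fun _ => lam) atTop := by
      rw [Metric.tendstoUniformly_iff] at huc ⊢
      intro η hη
      filter_upwards [huc η hη] with k hk x
      have h1 := hk x
      have heq : dist lam ((F k + fun (_ : Sph n) => lam) x) = dist ((0 : Sph n → ℝ) x) (F k x) := by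
        simp only [Pi.add_apply, Pi.zero_apply, Real.dist_eq]
        rw [show lam - (F k x + lam) = -(F k x) by ring, abs_neg,
          show (0:ℝ) - F k x = -(F k x) by ring, abs_neg]
      rwa [heq]
    have hlipg : ∀ k, LipschitzWith γ (F k + fun _ => lam) := fun k =>
      LipschitzWith.of_dist_le_mul fun x y => by
        simp only [Pi.add_apply, dist_add_right]
        exact (hlip k).dist_le_mul x y
    have htau : TauTendsto (fun k => F k + fun _ => lam) (fun _ => lam) := by
      refine ⟨hucg, ⟨4 * (γ : ℝ), fun k => ae_of_all _ fun x => ?_⟩,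
        ae_of_all _ fun x => ?_⟩
      · rw [sphGrad_add_const (F k) lam x]
        exact norm_sphGrad_le (hlip k) x
      · rw [sphGrad_const lam x]
        have hevk : ∀ᶠ k : ℕ in atTop,
            sphGrad (F k + fun _ => lam) (x : Eucl n) = 0 := by
          filter_upwards [hzero x] with k hk
          rw [sphGrad_add_const (F k) lam x,
            sphGrad_eq_zero_of_not_mem_tsupport (F k) x hk]
        exact Tendsto.congr' (hevk.mono fun k hk => hk.symm) tendsto_const_nhds
    have hVt := hτ (fun k => F k + fun _ => lam) (fun _ => lam)
      (fun k => ⟨γ, hlipg k⟩) ⟨0, LipschitzWith.const lam⟩ htau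
    have hsmall : ∀ᶠ k : ℕ in atTop,
        |V (F k + fun _ => lam) - V (fun _ => lam)| < ε / 2 := by
      have := Metric.tendsto_atTop.mp hVt (ε / 2) (by positivity)
      obtain ⟨N, hN⟩ := this
      refine eventually_atTop.2 ⟨N, fun k hk => ?_⟩
      have := hN k hk
      rwa [Real.dist_eq] at this
    obtain ⟨k, hk⟩ := hsmall.exists
    exact absurd (hbig k) (not_lt.mpr hk.le)
  obtain ⟨δ, hδ, hδclaim⟩ := claim
  refine ⟨δ, hδ, fun {ω} hω hdist => ?_⟩
  have hωδ : ω ≤ δ := by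
    rw [Real.dist_eq, sub_zero] at hdist
    have := abs_lt.mp hdist
    linarith [this.2]
  have hmono : ∀ C : Set (Sph n), band C ω ⊆ band C δ := fun C y hy =>
    ⟨hy.1, lt_of_lt_of_le hy.2 hωδ⟩
  have hub : ∀ f : {f : Sph n → ℝ //
      tsupport f ⊆ band A ω ∪ band B ω ∧ LipschitzWith γ f},
      |V ((f : Sph n → ℝ) + fun _ => lam) - V (fun _ => lam)| ≤ ε / 2 := fun f =>
    hδclaim f (f.2.1.trans (Set.union_subset_union (hmono A) (hmono B))) f.2.2
  have h1 : (⨆ f : {f : Sph n → ℝ //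
      tsupport f ⊆ band A ω ∪ band B ω ∧ LipschitzWith γ f},
      |V ((f : Sph n → ℝ) + fun _ => lam) - V (fun _ => lam)|) ≤ ε / 2 :=
    Real.iSup_le hub (by positivity)
  have h0 : (0:ℝ) ≤ ⨆ f : {f : Sph n → ℝ //
      tsupport f ⊆ band A ω ∪ band B ω ∧ LipschitzWith γ f},
      |V ((f : Sph n → ℝ) + fun _ => lam) - V (fun _ => lam)| :=
    Real.iSup_nonneg fun f => abs_nonneg _
  rw [Real.dist_eq, sub_zero, abs_of_nonneg h0]
  linarith
end
end

section
/- Let W: Lip(S¹) → ℝ be a τ-continuous rotation-invariant valuation with W(λ·1) = 0 for all λ ∈ ℝ. For γ ≥ 0, 0 < d ≤ π/2, 0 ≤ ℓ ≤ 2(π−d) and t₀ ∈ [0,2π], let h_{γ,d,ℓ,t₀} be the trapezoidal function equal to γ(t−t₀) on (t₀, t₀+d], to γd on (t₀+d, t₀+d+ℓ], to γ(t₀+2d+ℓ−t) on (t₀+d+ℓ, t₀+2d+ℓ] (intervals mod 2π), and 0 elsewhere. Then W(h_{γ,d,ℓ,t₀}) = W(h_{γ,d,0,0}); i.e., W does not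 depend on the length ℓ of the flat plateau or the position t₀. -/
open MeasureTheory Set Filter Topology Classical
open scoped ENNReal NNReal

noncomputable section

/-- A function `f : ℝ → ℝ` represents an element of `Lip(S¹)`: it is `2π`-periodic
(identifying functions on `S¹` with functions on `[0,2π]` with equal endpoint values)
and Lipschitz. -/
def LipC (f : ℝ → ℝ) : Prop :=
  Function.Periodic f (2 * Real.pi) ∧ ∃ L : ℝ≥0, LipschitzWith L f

/-- τ-convergence in `Lip(S¹)`: uniform convergence, a uniform a.e. bound on the
derivatives, and a.e. convergence of the derivatives. -/
def TauTendstoC (fk : ℕ → ℝ → ℝ) (f : ℝ → ℝ) : Prop :=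
  TendstoUniformly fk f atTop ∧
  (∃ C : ℝ, ∀ k, ∀ᵐ t ∂(volume.restrict (Set.Ioc 0 (2 * Real.pi))),
    |deriv (fk k) t| ≤ C) ∧
  (∀ᵐ t ∂(volume.restrict (Set.Ioc 0 (2 * Real.pi))),
    Tendsto (fun k => deriv (fk k) t) atTop (𝓝 (deriv f t)))

/-- `V` is a valuation on `Lip(S¹)`. -/
def IsValC (V : (ℝ → ℝ) → ℝ) : Prop :=
  ∀ f g : ℝ → ℝ, LipC f → LipC g → V (f ⊔ g) + V (f ⊓ g) = V f + V g

/-- τ-continuity of a functional on `Lip(S¹)`. -/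
def TauContC (V : (ℝ → ℝ) → ℝ) : Prop :=
  ∀ (fk : ℕ → ℝ → ℝ) (f : ℝ → ℝ), (∀ k, LipC (fk k)) → LipC f →
    TauTendstoC fk f → Tendsto (fun k => V (fk k)) atTop (𝓝 (V f))

/-- Rotation invariance on `Lip(S¹)`: invariance under rotations of the circle, i.e.
translations of the variable. -/
def RotInvC (V : (ℝ → ℝ) → ℝ) : Prop :=
  ∀ (c : ℝ) (f : ℝ → ℝ), LipC f → V (fun t => f (t + c)) = V f

/-- The trapezoidal function `h_{γ,d,ℓ,t₀}` on the circle: starting at `t₀` it rises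
with slope `γ` for time `d`, stays at the plateau value `γd` for time `ℓ`, decreases
with slope `γ` for time `d`, and is `0` elsewhere (everything mod `2π`). -/
noncomputable def hTrap (γ d ℓ t₀ : ℝ) (t : ℝ) : ℝ :=
  max 0 (min (γ * d)
    (min (γ * (2 * Real.pi * Int.fract ((t - t₀) / (2 * Real.pi))))
      (γ * (2 * d + ℓ - 2 * Real.pi * Int.fract ((t - t₀) / (2 * Real.pi))))))

namespace PlateauAux
local notation "π" => Real.pi

lemma two_pi_pos : (0:ℝ) < 2*π := by linarith [Real.pi_pos]

/-- γ-free profile. -/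
noncomputable def qr (d ℓ y : ℝ) : ℝ := max 0 (min d (min y (2*d+ℓ-y)))

lemma qr_nonneg (d ℓ y : ℝ) : 0 ≤ qr d ℓ y := le_max_left _ _

lemma qr_le (d ℓ y : ℝ) (hd : 0 ≤ d) : qr d ℓ y ≤ d := by
  simp only [qr, min_def, max_def]; split_ifs <;> linarith

lemma hTrap_eq (γ d ℓ t₀ t : ℝ) (hγ : 0 ≤ γ) :
    hTrap γ d ℓ t₀ t = γ * qr d ℓ (2*π*Int.fract ((t-t₀)/(2*π))) := by
  simp only [hTrap, qr, mul_min_of_nonneg _ _ hγ, mul_max_of_nonneg _ _ hγ, mul_zero]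

lemma coord_mem (t : ℝ) : 2*π*Int.fract (t/(2*π)) ∈ Set.Ico 0 (2*π) := by
  constructor
  · have := Int.fract_nonneg (t/(2*π)); positivity
  · have h := Int.fract_lt_one (t/(2*π))
    nlinarith [two_pi_pos]

lemma coord_shift (a t : ℝ) (ha0 : 0 ≤ a) (ha2 : a ≤ 2*π) :
    (a ≤ 2*π*Int.fract (t/(2*π)) ∧
      2*π*Int.fract ((t-a)/(2*π)) = 2*π*Int.fract (t/(2*π)) - a) ∨
    (2*π*Int.fract (t/(2*π)) < a ∧
      2*π*Int.fract ((t-a)/(2*π)) = 2*π*Int.fract (t/(2*π)) - a + 2*π) := by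
  have h2 := two_pi_pos
  have hsplit : (t-a)/(2*π) = (Int.fract (t/(2*π)) - a/(2*π)) + (⌊t/(2*π)⌋ : ℤ) := by
    rw [Int.fract]; push_cast; field_simp; ring
  rw [hsplit, Int.fract_add_intCast]
  set r := Int.fract (t/(2*π)) with hr
  have hr0 : 0 ≤ r := Int.fract_nonneg _
  have hr1 : r < 1 := Int.fract_lt_one _
  rcases le_or_gt a (2*π*r) with h | h
  · left
    refine ⟨h, ?_⟩
    have hv : Int.fract (r - a/(2*π)) = r - a/(2*π) := by
      rw [Int.fract_eq_self]
      constructor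
      · rw [le_sub_iff_add_le, zero_add, div_le_iff₀ h2]
        linarith
      · have : 0 ≤ a/(2*π) := by positivity
        linarith
    rw [hv]; field_simp
  · right
    refine ⟨h, ?_⟩
    have hfl : ⌊r - a/(2*π)⌋ = -1 := by
      rw [Int.floor_eq_iff]
      constructor
      · push_cast
        rw [le_sub_iff_add_le]
        have : a/(2*π) ≤ 1 := by rw [div_le_one h2]; linarith
        linarith
      · push_cast
        have : r < a/(2*π) := by rw [lt_div_iff₀ h2]; linarith
        linarith
    have hv : Int.fract (r - a/(2*π)) = r - a/(2*π) + 1 := by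
      rw [Int.fract, hfl]; push_cast; ring
    rw [hv]; field_simp


lemma hTrap_periodic (γ d ℓ t₀ : ℝ) : Function.Periodic (hTrap γ d ℓ t₀) (2*π) := by
  intro t
  have h2 : (2*π) ≠ 0 := ne_of_gt two_pi_pos
  have harg : (t + 2*π - t₀)/(2*π) = (t - t₀)/(2*π) + 1 := by field_simp; ring
  simp only [hTrap, harg, Int.fract_add_one]

lemma qr_lip_y (d ℓ y₁ y₂ : ℝ) : |qr d ℓ y₁ - qr d ℓ y₂| ≤ |y₁ - y₂| := by
  rw [abs_sub_le_iff]
  constructor <;>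
    (simp only [qr, min_def, max_def]; split_ifs <;>
      linarith [le_abs_self (y₁-y₂), neg_abs_le (y₁-y₂)])

lemma qr_lip_l (d ℓ₁ ℓ₂ y : ℝ) : |qr d ℓ₁ y - qr d ℓ₂ y| ≤ |ℓ₁ - ℓ₂| := by
  rw [abs_sub_le_iff]
  constructor <;>
    (simp only [qr, min_def, max_def]; split_ifs <;>
      linarith [le_abs_self (ℓ₁-ℓ₂), neg_abs_le (ℓ₁-ℓ₂)])

lemma qr_rise (d ℓ y : ℝ) (hℓ : 0 ≤ ℓ) (h0 : 0 ≤ y) (h1 : y ≤ d) : qr d ℓ y = y := by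
  simp only [qr, min_def, max_def]; split_ifs <;> linarith

lemma qr_plateau (d ℓ y : ℝ) (hd : 0 ≤ d) (h1 : d ≤ y) (h2 : y ≤ d + ℓ) : qr d ℓ y = d := by
  simp only [qr, min_def, max_def]; split_ifs <;> linarith

lemma qr_fall (d ℓ y : ℝ) (hd : 0 ≤ d) (hℓ : 0 ≤ ℓ) (h1 : d + ℓ ≤ y) (h2 : y ≤ 2*d + ℓ) :
    qr d ℓ y = 2*d + ℓ - y := by
  simp only [qr, min_def, max_def]; split_ifs <;> linarith

lemma qr_zero (d ℓ y : ℝ) (hd : 0 ≤ d) (h : 2*d + ℓ ≤ y) : qr d ℓ y = 0 := by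
  simp only [qr, min_def, max_def]; split_ifs <;> linarith

lemma qr_tail (d ℓ y : ℝ) (h1 : 2*d + ℓ - y ≤ d) (h2 : 2*d + ℓ - y ≤ y) :
    qr d ℓ y = max 0 (2*d + ℓ - y) := by
  simp only [qr, min_def, max_def]; split_ifs <;> linarith

lemma hTrap_lip (γ d ℓ t₀ : ℝ) (hγ : 0 ≤ γ) (hd : 0 < d) (hℓ : 0 ≤ ℓ)
    (hsum : 2*d + ℓ ≤ 2*π) : LipschitzWith (Real.toNNReal γ) (hTrap γ d ℓ t₀) := by
  rw [lipschitzWith_iff_dist_le_mul]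
  intro s t
  rw [Real.dist_eq, Real.dist_eq, Real.coe_toNNReal _ hγ]
  rw [hTrap_eq γ d ℓ t₀ s hγ, hTrap_eq γ d ℓ t₀ t hγ]
  set x := 2*π*Int.fract ((s-t₀)/(2*π)) with hx
  set y := 2*π*Int.fract ((t-t₀)/(2*π)) with hy
  have hxm := coord_mem (s-t₀)
  have hym := coord_mem (t-t₀)
  rw [← hx] at hxm
  rw [← hy] at hym
  rw [← mul_sub, abs_mul, abs_of_nonneg hγ]
  apply mul_le_mul_of_nonneg_left _ hγ
  have h2 := two_pi_pos
  rcases le_or_gt d |s - t| with hcase | hcase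
  · -- far apart: use the bound 0 ≤ qr ≤ d
    rw [abs_sub_le_iff]
    constructor <;>
      linarith [qr_le d ℓ x hd.le, qr_le d ℓ y hd.le, qr_nonneg d ℓ x, qr_nonneg d ℓ y]
  · -- close: compare coordinates
    obtain ⟨hx0, hx2⟩ := hxm
    obtain ⟨hy0, hy2⟩ := hym
    have hdπ : d ≤ π := by linarith
    have hx1 : x = (s - t₀) - 2*π*(⌊(s-t₀)/(2*π)⌋ : ℤ) := by
      rw [hx, Int.fract]
      field_simp
    have hy1 : y = (t - t₀) - 2*π*(⌊(t-t₀)/(2*π)⌋ : ℤ) := by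
      rw [hy, Int.fract]
      field_simp
    set n : ℤ := ⌊(s-t₀)/(2*π)⌋ - ⌊(t-t₀)/(2*π)⌋ with hn
    have hxy : x - y = (s - t) - 2*π*(n : ℝ) := by
      rw [hx1, hy1]
      push_cast [hn]
      ring
    have habs := abs_lt.mp hcase
    have hnlt : (n:ℝ) < 2 := by
      have h' : 2*π*(n:ℝ) < 2*π*2 := by linarith
      exact (mul_lt_mul_iff_right₀ two_pi_pos).mp h'
    have hngt : (-2:ℝ) < (n:ℝ) := by
      have h' : 2*π*(-2:ℝ) < 2*π*(n:ℝ) := by linarith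
      exact (mul_lt_mul_iff_right₀ two_pi_pos).mp h'
    have hn1 : (n:ℤ) < 2 := by exact_mod_cast hnlt
    have hn0 : (-2:ℤ) < n := by exact_mod_cast hngt
    have hncases : n = -1 ∨ n = 0 ∨ n = 1 := by omega
    rcases hncases with h | h | h
    · -- n = -1 : y - x = (t - s) - 2π, so y < d and x > 2π - d
      rw [h] at hxy; push_cast at hxy
      have hts : 0 < t - s := by linarith
      have habs2 : |s - t| = t - s := by rw [abs_sub_comm, abs_of_pos hts]
      have hyd : y < d := by linarith
      have hqy := qr_rise d ℓ y hℓ hy0 hyd.le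
      have hqx := qr_tail d ℓ x (by linarith) (by linarith)
      have hb1 : max 0 (2*d + ℓ - x) ≤ 2*π - x := by apply max_le <;> linarith
      have hb0 : 0 ≤ max 0 (2*d + ℓ - x) := le_max_left _ _
      rw [hqx, hqy, habs2, abs_sub_le_iff]
      constructor <;> linarith
    · rw [h] at hxy; push_cast at hxy
      have hxy' : x - y = s - t := by linarith
      calc |qr d ℓ x - qr d ℓ y| ≤ |x - y| := qr_lip_y d ℓ x y
        _ = |s - t| := by rw [hxy']
    · -- n = 1 : x - y = (s - t) - 2π, so x < d and y > 2π - d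
      rw [h] at hxy; push_cast at hxy
      have hst : 0 < s - t := by linarith
      have habs2 : |s - t| = s - t := abs_of_pos hst
      have hxd : x < d := by linarith
      have hqx := qr_rise d ℓ x hℓ hx0 hxd.le
      have hqy := qr_tail d ℓ y (by linarith) (by linarith)
      have hb1 : max 0 (2*d + ℓ - y) ≤ 2*π - y := by apply max_le <;> linarith
      have hb0 : 0 ≤ max 0 (2*d + ℓ - y) := le_max_left _ _
      rw [hqx, hqy, habs2, abs_sub_le_iff]
      constructor <;> linarith

lemma latt (m p q a b : ℝ) (ha : 0 ≤ a) (hb : 0 ≤ b) (hpq : p + q = 2*m) :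
    max (min m (min (p+a) q)) (min m (min p (q+b))) = min m (min (p+a) (q+b)) ∧
    min (min m (min (p+a) q)) (min m (min p (q+b))) = min m (min p q) := by
  constructor <;> (simp only [min_def, max_def]; split_ifs <;> linarith)

lemma max0_max (A B : ℝ) : max 0 (max A B) = max (max 0 A) (max 0 B) := by
  rw [max_max_max_comm, max_self]

lemma max0_min (A B : ℝ) : max 0 (min A B) = min (max 0 A) (max 0 B) := by
  rcases le_total A B with h|h <;> simp [min_def, max_def] <;> split_ifs <;> linarith


lemma hTrap_lipc (γ d ℓ t₀ : ℝ) (hγ : 0 ≤ γ) (hd : 0 < d) (hℓ : 0 ≤ ℓ)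
    (hsum : 2*d + ℓ ≤ 2*π) : LipC (hTrap γ d ℓ t₀) :=
  ⟨hTrap_periodic γ d ℓ t₀, ⟨Real.toNNReal γ, hTrap_lip γ d ℓ t₀ hγ hd hℓ hsum⟩⟩

lemma hTrap_nonneg (γ d ℓ t₀ t : ℝ) : 0 ≤ hTrap γ d ℓ t₀ t := le_max_left _ _

/-- Rotation invariance kills the position parameter. -/
lemma rot_indep (W : (ℝ → ℝ) → ℝ) (hrot : RotInvC W) (γ d ℓ t₀ : ℝ)
    (hγ : 0 ≤ γ) (hd : 0 < d) (hℓ : 0 ≤ ℓ) (hsum : 2*d + ℓ ≤ 2*π) :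
    W (hTrap γ d ℓ t₀) = W (hTrap γ d ℓ 0) := by
  have hfe : hTrap γ d ℓ t₀ = (fun t => hTrap γ d ℓ 0 (t + (-t₀))) := by
    funext t
    have e : t + -t₀ - 0 = t - t₀ := by ring
    simp only [hTrap, e]
  rw [hfe]
  exact hrot (-t₀) _ (hTrap_lipc γ d ℓ 0 hγ hd hℓ hsum)

/-- Core gluing identity at the profile level. -/
lemma qr_glue (d a b z : ℝ) (hd : 0 < d) (ha : 0 ≤ a) (hb : 0 ≤ b) :
    max (qr d a (z+a)) (qr d b z) = qr d (a+b) (z+a) ∧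
    min (qr d a (z+a)) (qr d b z) = qr d 0 z := by
  have e1 : 2*d + a - (z+a) = 2*d - z := by ring
  have e2 : 2*d + (a+b) - (z+a) = 2*d - z + b := by ring
  have e3 : 2*d + b - z = 2*d - z + b := by ring
  have e4 : 2*d + 0 - z = 2*d - z := by ring
  obtain ⟨l1, l2⟩ := latt d z (2*d - z) a b ha hb (by ring)
  constructor
  · simp only [qr, e1, e2, e3]
    rw [← max0_max, l1]
  · simp only [qr, e1, e3, e4]
    rw [← max0_min, l2]

lemma qr_small (d ℓ ℓ' x : ℝ) (hd : 0 < d) (hx : 0 ≤ x) (hxa : x ≤ ℓ) (hll : ℓ ≤ ℓ') :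
    qr d ℓ x = qr d ℓ' x := by
  simp only [qr, min_def, max_def]; split_ifs <;> linarith

/-- The fundamental gluing identity: the pointwise max/min of `hTrap γ d a 0` and
`hTrap γ d b a` are again trapezoids. -/
lemma glue (γ d a b : ℝ) (hγ : 0 ≤ γ) (hd : 0 < d) (ha : 0 ≤ a) (hb : 0 ≤ b)
    (hab : 2*d + a + b ≤ 2*π) :
    (hTrap γ d a 0) ⊔ (hTrap γ d b a) = hTrap γ d (a+b) 0 ∧
    (hTrap γ d a 0) ⊓ (hTrap γ d b a) = hTrap γ d 0 a := by
  have h2 := two_pi_pos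
  have ha2 : a ≤ 2*π := by linarith
  have key : ∀ t, max (hTrap γ d a 0 t) (hTrap γ d b a t) = hTrap γ d (a+b) 0 t ∧
      min (hTrap γ d a 0 t) (hTrap γ d b a t) = hTrap γ d 0 a t := by
    intro t
    rw [hTrap_eq γ d a 0 t hγ, hTrap_eq γ d b a t hγ, hTrap_eq γ d (a+b) 0 t hγ,
      hTrap_eq γ d 0 a t hγ, sub_zero]
    rw [← mul_max_of_nonneg _ _ hγ, ← mul_min_of_nonneg _ _ hγ]
    obtain ⟨hx0, hx2⟩ := coord_mem t
    rcases coord_shift a t ha ha2 with ⟨hax, hx'⟩ | ⟨hax, hx'⟩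
    · rw [hx']
      set w := 2*π*Int.fract (t/(2*π)) - a with hwd
      have hxw : 2*π*Int.fract (t/(2*π)) = w + a := by rw [hwd]; ring
      rw [hxw]
      obtain ⟨e1, e2⟩ := qr_glue d a b w hd ha hb
      rw [e1, e2]
      exact ⟨rfl, rfl⟩
    · rw [hx']
      have hz1 : qr d b (2*π*Int.fract (t/(2*π)) - a + 2*π) = 0 :=
        qr_zero d b _ hd.le (by linarith)
      have hz2 : qr d 0 (2*π*Int.fract (t/(2*π)) - a + 2*π) = 0 :=
        qr_zero d 0 _ hd.le (by linarith)
      have hsm : qr d a (2*π*Int.fract (t/(2*π))) =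
          qr d (a+b) (2*π*Int.fract (t/(2*π))) :=
        qr_small d a (a+b) _ hd hx0 hax.le (by linarith)
      rw [hz1, hz2, hsm]
      constructor
      · rw [max_eq_left (qr_nonneg _ _ _)]
      · rw [min_eq_right (qr_nonneg _ _ _)]
  constructor <;> funext t
  · rw [Pi.sup_apply, (key t).1]
  · rw [Pi.inf_apply, (key t).2]

section Notch
variable {d x u : ℝ}
local notation "Lm" => 2*π - 2*d
local notation "Bp" => π - 2*d

lemma qr_eval1 (hd : 0 < d) (hd2 : d ≤ π/2) (h0 : 0 ≤ u) (h1 : u ≤ π) :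
    qr d (2*π - 2*d) u = min d u := by
  simp only [qr, min_def, max_def]; split_ifs <;> linarith [Real.pi_pos]

lemma qr_eval2 (hd : 0 < d) (hd2 : d ≤ π/2) (h0 : 0 ≤ u) (h1 : u ≤ π) :
    qr d (2*π - 2*d) (u + π) = min d (π - u) := by
  simp only [qr, min_def, max_def]; split_ifs <;> linarith [Real.pi_pos]

lemma qr_eval3 (hd : 0 < d) (hd2 : d ≤ π/2) (h0 : 0 ≤ u) (h1 : u ≤ π) :
    qr d (π - 2*d) u = min d (min u (π - u)) := by
  simp only [qr, min_def, max_def]; split_ifs <;> linarith [Real.pi_pos]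

lemma qr_eval4 (hd : 0 < d) (hd2 : d ≤ π/2) (h0 : 0 ≤ u) (h1 : u ≤ π) :
    qr d (π - 2*d) (u + π) = 0 := by
  simp only [qr, min_def, max_def]; split_ifs <;> linarith [Real.pi_pos]

lemma minmax_d (hd : 0 < d) (hd2 : d ≤ π/2) (h0 : 0 ≤ u) (h1 : u ≤ π) :
    max (min d u) (min d (π - u)) = d := by
  simp only [min_def, max_def]; split_ifs <;> linarith [Real.pi_pos]

lemma minmin_d (hd : 0 < d) (hd2 : d ≤ π/2) (h0 : 0 ≤ u) (h1 : u ≤ π) :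
    min (min d u) (min d (π - u)) = min d (min u (π - u)) := by
  simp only [min_def, max_def]; split_ifs <;> linarith [Real.pi_pos]

lemma minmin_nonneg (hd : 0 < d) (h0 : 0 ≤ u) (h1 : u ≤ π) :
    0 ≤ min d (min u (π - u)) := by
  simp only [min_def]; split_ifs <;> linarith [Real.pi_pos]

/-- The notch identities. -/
lemma notch (γ d : ℝ) (hγ : 0 ≤ γ) (hd : 0 < d) (hd2 : d ≤ π/2) :
    (hTrap γ d (2*π - 2*d) 0) ⊔ (hTrap γ d (2*π - 2*d) π) = (fun _ => γ*d) ∧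
    (hTrap γ d (2*π - 2*d) 0) ⊓ (hTrap γ d (2*π - 2*d) π)
      = (hTrap γ d (π - 2*d) 0) ⊔ (hTrap γ d (π - 2*d) π) ∧
    (hTrap γ d (π - 2*d) 0) ⊓ (hTrap γ d (π - 2*d) π) = (fun _ => (0:ℝ)) := by
  have hπ := Real.pi_pos
  have hπ2 : (0:ℝ) ≤ π ∧ π ≤ 2*π := ⟨hπ.le, by linarith⟩
  have key : ∀ t,
      (max (hTrap γ d (2*π - 2*d) 0 t) (hTrap γ d (2*π - 2*d) π t) = γ*d) ∧
      (min (hTrap γ d (2*π - 2*d) 0 t) (hTrap γ d (2*π - 2*d) π t)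
        = max (hTrap γ d (π - 2*d) 0 t) (hTrap γ d (π - 2*d) π t)) ∧
      (min (hTrap γ d (π - 2*d) 0 t) (hTrap γ d (π - 2*d) π t) = 0) := by
    intro t
    rw [hTrap_eq γ d (2*π - 2*d) 0 t hγ, hTrap_eq γ d (2*π - 2*d) π t hγ,
      hTrap_eq γ d (π - 2*d) 0 t hγ, hTrap_eq γ d (π - 2*d) π t hγ, sub_zero]
    rw [← mul_max_of_nonneg _ _ hγ, ← mul_min_of_nonneg _ _ hγ,
      ← mul_max_of_nonneg _ _ hγ, ← mul_min_of_nonneg _ _ hγ]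
    obtain ⟨hx0, hx2⟩ := coord_mem t
    rcases coord_shift π t hπ2.1 hπ2.2 with ⟨hax, hx'⟩ | ⟨hax, hx'⟩
    · -- π ≤ x : pair is (u + π, u) with u = x - π
      rw [hx']
      set u := 2*π*Int.fract (t/(2*π)) - π with hud
      have hxu : 2*π*Int.fract (t/(2*π)) = u + π := by rw [hud]; ring
      have hu0 : 0 ≤ u := by rw [hud]; linarith
      have hu1 : u ≤ π := by rw [hud]; linarith
      rw [hxu, qr_eval1 hd hd2 hu0 hu1, qr_eval2 hd hd2 hu0 hu1,
        qr_eval3 hd hd2 hu0 hu1, qr_eval4 hd hd2 hu0 hu1]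
      refine ⟨?_, ?_, ?_⟩
      · rw [max_comm, minmax_d hd hd2 hu0 hu1]
      · rw [min_comm, minmin_d hd hd2 hu0 hu1, max_eq_right (minmin_nonneg hd hu0 hu1)]
      · rw [min_eq_left (minmin_nonneg hd hu0 hu1), mul_zero]
    · -- x < π : pair is (u, u + π) with u = x
      rw [hx']
      set u := 2*π*Int.fract (t/(2*π)) with hud
      have e : u - π + 2*π = u + π := by ring
      rw [e]
      have hu0 : 0 ≤ u := hx0
      have hu1 : u ≤ π := by linarith
      rw [qr_eval1 hd hd2 hu0 hu1, qr_eval2 hd hd2 hu0 hu1,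
        qr_eval3 hd hd2 hu0 hu1, qr_eval4 hd hd2 hu0 hu1]
      refine ⟨?_, ?_, ?_⟩
      · rw [minmax_d hd hd2 hu0 hu1]
      · rw [minmin_d hd hd2 hu0 hu1, max_eq_left (minmin_nonneg hd hu0 hu1)]
      · rw [min_eq_right (minmin_nonneg hd hu0 hu1), mul_zero]
  refine ⟨funext fun t => ?_, funext fun t => ?_, funext fun t => ?_⟩
  · rw [Pi.sup_apply, (key t).1]
  · rw [Pi.inf_apply, (key t).2.1, Pi.sup_apply]
  · rw [Pi.inf_apply, (key t).2.2]

end Notch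

section Val
variable (W : (ℝ → ℝ) → ℝ)

lemma val_add (hval : IsValC W) (hrot : RotInvC W) (γ d a b : ℝ)
    (hγ : 0 ≤ γ) (hd : 0 < d) (ha : 0 ≤ a) (hb : 0 ≤ b) (hab : 2*d + a + b ≤ 2*π) :
    W (hTrap γ d a 0) + W (hTrap γ d b 0)
      = W (hTrap γ d (a+b) 0) + W (hTrap γ d 0 0) := by
  have l1 := hTrap_lipc γ d a 0 hγ hd ha (by linarith)
  have l2 := hTrap_lipc γ d b a hγ hd hb (by linarith)
  have hv := hval _ _ l1 l2
  obtain ⟨hsup, hinf⟩ := glue γ d a b hγ hd ha hb hab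
  rw [hsup, hinf] at hv
  have r1 : W (hTrap γ d b a) = W (hTrap γ d b 0) :=
    rot_indep W hrot γ d b a hγ hd hb (by linarith)
  have r2 : W (hTrap γ d 0 a) = W (hTrap γ d 0 0) :=
    rot_indep W hrot γ d 0 a hγ hd le_rfl (by linarith)
  rw [r1, r2] at hv
  linarith

lemma val_pi (hval : IsValC W) (hrot : RotInvC W) (hconst : ∀ lam : ℝ, W (fun _ => lam) = 0)
    (γ d : ℝ) (hγ : 0 ≤ γ) (hd : 0 < d) (hd2 : d ≤ π/2) :
    W (hTrap γ d π 0) = W (hTrap γ d 0 0) := by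
  have hπ := Real.pi_pos
  have hLm0 : 0 ≤ 2*π - 2*d := by linarith
  have hB0 : 0 ≤ π - 2*d := by linarith
  have lN0 := hTrap_lipc γ d (2*π - 2*d) 0 hγ hd hLm0 (by linarith)
  have lNπ := hTrap_lipc γ d (2*π - 2*d) π hγ hd hLm0 (by linarith)
  have lB0 := hTrap_lipc γ d (π - 2*d) 0 hγ hd hB0 (by linarith)
  have lBπ := hTrap_lipc γ d (π - 2*d) π hγ hd hB0 (by linarith)
  obtain ⟨n1, n2, n3⟩ := notch γ d hγ hd hd2
  have hv1 := hval _ _ lN0 lNπ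
  rw [n1, n2] at hv1
  have hv2 := hval _ _ lB0 lBπ
  rw [n3] at hv2
  have rN : W (hTrap γ d (2*π - 2*d) π) = W (hTrap γ d (2*π - 2*d) 0) :=
    rot_indep W hrot γ d (2*π - 2*d) π hγ hd hLm0 (by linarith)
  have rB : W (hTrap γ d (π - 2*d) π) = W (hTrap γ d (π - 2*d) 0) :=
    rot_indep W hrot γ d (π - 2*d) π hγ hd hB0 (by linarith)
  rw [rN] at hv1
  rw [rB] at hv2
  rw [hconst (γ*d)] at hv1
  rw [hconst 0] at hv2
  -- hv1 : 0 + W (B0 ⊔ Bπ) = 2 W N0 ; hv2 : W (B0 ⊔ Bπ) + 0 = 2 W B0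
  have hNB : W (hTrap γ d (2*π - 2*d) 0) = W (hTrap γ d (π - 2*d) 0) := by linarith
  have hadd := val_add W hval hrot γ d (π - 2*d) π hγ hd hB0 hπ.le (by linarith)
  have e : (π - 2*d) + π = 2*π - 2*d := by ring
  rw [e] at hadd
  linarith

lemma val_dyadic (hval : IsValC W) (hrot : RotInvC W)
    (hconst : ∀ lam : ℝ, W (fun _ => lam) = 0)
    (γ d : ℝ) (hγ : 0 ≤ γ) (hd : 0 < d) (hd2 : d ≤ π/2) :
    ∀ m : ℕ, W (hTrap γ d (π/2^m) 0) = W (hTrap γ d 0 0) := by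
  have hπ := Real.pi_pos
  intro m
  induction m with
  | zero => simpa using val_pi W hval hrot hconst γ d hγ hd hd2
  | succ m ih =>
    have hq : (0:ℝ) < π/2^(m+1) := by positivity
    have hqm : π/2^m ≤ π := by
      apply div_le_self hπ.le
      exact one_le_pow₀ (by norm_num)
    have hadd := val_add W hval hrot γ d (π/2^(m+1)) (π/2^(m+1)) hγ hd hq.le hq.le
      (by
        have e : π/2^(m+1) + π/2^(m+1) = π/2^m := by
          rw [pow_succ]; field_simp; ring
        linarith)
    have e : π/2^(m+1) + π/2^(m+1) = π/2^m := by
      rw [pow_succ]; field_simp; ring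
    rw [e] at hadd
    rw [ih] at hadd
    linarith

lemma val_multiple (hval : IsValC W) (hrot : RotInvC W)
    (hconst : ∀ lam : ℝ, W (fun _ => lam) = 0)
    (γ d : ℝ) (hγ : 0 ≤ γ) (hd : 0 < d) (hd2 : d ≤ π/2) (m : ℕ) :
    ∀ n : ℕ, (n:ℝ)*(π/2^m) ≤ 2*π - 2*d →
      W (hTrap γ d ((n:ℝ)*(π/2^m)) 0) = W (hTrap γ d 0 0) := by
  have hπ := Real.pi_pos
  have hq : (0:ℝ) < π/2^m := by positivity
  intro n
  induction n with
  | zero => norm_num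
  | succ n ih =>
    intro hbound
    have hnq : (n:ℝ)*(π/2^m) ≤ ((n:ℕ)+1:ℝ)*(π/2^m) := by
      apply mul_le_mul_of_nonneg_right _ hq.le
      push_cast; linarith
    have hadd := val_add W hval hrot γ d ((n:ℝ)*(π/2^m)) (π/2^m) hγ hd
      (by positivity) hq.le
      (by push_cast at hbound ⊢; nlinarith)
    have e : (n:ℝ)*(π/2^m) + π/2^m = ((n+1:ℕ):ℝ)*(π/2^m) := by push_cast; ring
    rw [e] at hadd
    have ihh := ih (le_trans hnq (by push_cast at hbound ⊢; linarith))
    rw [ihh, val_dyadic W hval hrot hconst γ d hγ hd hd2 m] at hadd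
    linarith

end Val

section Deriv
variable {γ d ℓ : ℝ}

lemma hTrap_eq_self (hγ : 0 ≤ γ) {s : ℝ} (hs : s ∈ Set.Ioo 0 (2*π)) :
    hTrap γ d ℓ 0 s = γ * qr d ℓ s := by
  rw [hTrap_eq γ d ℓ 0 s hγ, sub_zero,
    Int.fract_eq_self.mpr ⟨div_nonneg hs.1.le two_pi_pos.le, by rw [div_lt_one two_pi_pos]; exact hs.2⟩]
  congr 1
  field_simp

lemma deriv_rise (hγ : 0 ≤ γ) (hd : 0 < d) (hℓ : 0 ≤ ℓ) (hsum : 2*d + ℓ ≤ 2*π)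
    {t : ℝ} (ht : t ∈ Set.Ioo 0 d) : deriv (hTrap γ d ℓ 0) t = γ := by
  have hss : Set.Ioo (0:ℝ) d ⊆ Set.Ioo 0 (2*π) := Set.Ioo_subset_Ioo le_rfl (by linarith)
  have hev : hTrap γ d ℓ 0 =ᶠ[𝓝 t] (fun s => γ * s) := by
    filter_upwards [Ioo_mem_nhds ht.1 ht.2] with s hs
    rw [hTrap_eq_self hγ (hss hs), qr_rise d ℓ s hℓ hs.1.le hs.2.le]
  rw [hev.deriv_eq]
  simpa using ((hasDerivAt_id t).const_mul γ).deriv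

lemma deriv_plateau (hγ : 0 ≤ γ) (hd : 0 < d) (hℓ : 0 ≤ ℓ) (hsum : 2*d + ℓ ≤ 2*π)
    {t : ℝ} (ht : t ∈ Set.Ioo d (d+ℓ)) : deriv (hTrap γ d ℓ 0) t = 0 := by
  have hss : Set.Ioo d (d+ℓ) ⊆ Set.Ioo 0 (2*π) :=
    Set.Ioo_subset_Ioo (by linarith) (by linarith)
  have hev : hTrap γ d ℓ 0 =ᶠ[𝓝 t] (fun _ => γ * d) := by
    filter_upwards [Ioo_mem_nhds ht.1 ht.2] with s hs
    rw [hTrap_eq_self hγ (hss hs), qr_plateau d ℓ s hd.le hs.1.le hs.2.le]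
  rw [hev.deriv_eq, deriv_const]

lemma deriv_fall (hγ : 0 ≤ γ) (hd : 0 < d) (hℓ : 0 ≤ ℓ) (hsum : 2*d + ℓ ≤ 2*π)
    {t : ℝ} (ht : t ∈ Set.Ioo (d+ℓ) (2*d+ℓ)) : deriv (hTrap γ d ℓ 0) t = -γ := by
  have hss : Set.Ioo (d+ℓ) (2*d+ℓ) ⊆ Set.Ioo 0 (2*π) :=
    Set.Ioo_subset_Ioo (by linarith) (by linarith)
  have hev : hTrap γ d ℓ 0 =ᶠ[𝓝 t] (fun s => γ * (2*d + ℓ - s)) := by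
    filter_upwards [Ioo_mem_nhds ht.1 ht.2] with s hs
    rw [hTrap_eq_self hγ (hss hs), qr_fall d ℓ s hd.le hℓ hs.1.le hs.2.le]
  rw [hev.deriv_eq]
  have h1 : HasDerivAt (fun s : ℝ => 2*d + ℓ - s) (-1) t := by
    simpa using (hasDerivAt_id t).const_sub (2*d + ℓ)
  simpa using (h1.const_mul γ).deriv

lemma deriv_tail (hγ : 0 ≤ γ) (hd : 0 < d) (hℓ : 0 ≤ ℓ) (hsum : 2*d + ℓ ≤ 2*π)
    {t : ℝ} (ht : t ∈ Set.Ioo (2*d+ℓ) (2*π)) : deriv (hTrap γ d ℓ 0) t = 0 := by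
  have hss : Set.Ioo (2*d+ℓ) (2*π) ⊆ Set.Ioo 0 (2*π) :=
    Set.Ioo_subset_Ioo (by linarith) le_rfl
  have hev : hTrap γ d ℓ 0 =ᶠ[𝓝 t] (fun _ => (0:ℝ)) := by
    filter_upwards [Ioo_mem_nhds ht.1 ht.2] with s hs
    rw [hTrap_eq_self hγ (hss hs), qr_zero d ℓ s hd.le hs.1.le, mul_zero]
  rw [hev.deriv_eq, deriv_const]

lemma deriv_bound (hγ : 0 ≤ γ) (hd : 0 < d) (hℓ : 0 ≤ ℓ) (hsum : 2*d + ℓ ≤ 2*π) :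
    ∀ᵐ t ∂(volume.restrict (Set.Ioc 0 (2*π))), |deriv (hTrap γ d ℓ 0) t| ≤ γ := by
  rw [ae_restrict_iff' measurableSet_Ioc]
  have hfin : volume ({d, d+ℓ, 2*d+ℓ, 2*π} : Set ℝ) = 0 :=
    (Set.toFinite _).measure_zero _
  filter_upwards [measure_eq_zero_iff_ae_notMem.mp hfin] with t htn htIoc
  simp only [Set.mem_insert_iff, Set.mem_singleton_iff, not_or] at htn
  obtain ⟨h1, h2, h3, h4⟩ := htn
  obtain ⟨ht0, ht2⟩ := htIoc
  have ht2' : t < 2*π := lt_of_le_of_ne ht2 h4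
  rcases lt_trichotomy t d with hc | hc | hc
  · rw [deriv_rise hγ hd hℓ hsum ⟨ht0, hc⟩, abs_of_nonneg hγ]
  · exact absurd hc h1
  · rcases lt_trichotomy t (d+ℓ) with hc2 | hc2 | hc2
    · rw [deriv_plateau hγ hd hℓ hsum ⟨hc, hc2⟩, abs_zero]; exact hγ
    · exact absurd hc2 h2
    · rcases lt_trichotomy t (2*d+ℓ) with hc3 | hc3 | hc3
      · rw [deriv_fall hγ hd hℓ hsum ⟨hc2, hc3⟩, abs_neg, abs_of_nonneg hγ]
      · exact absurd hc3 h3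
      · rw [deriv_tail hγ hd hℓ hsum ⟨hc3, ht2'⟩, abs_zero]; exact hγ

end Deriv

section Conv
variable {γ d ℓ : ℝ}

lemma pow_half_tendsto : Tendsto (fun k : ℕ => π/2^k) atTop (𝓝 0) := by
  have h : Tendsto (fun k : ℕ => π * (1/2:ℝ)^k) atTop (𝓝 (π * 0)) :=
    (tendsto_pow_atTop_nhds_zero_of_lt_one (by norm_num) (by norm_num)).const_mul π
  rw [mul_zero] at h
  convert h using 2 with k
  rw [one_div, inv_pow]
  ring

lemma tau_conv (hγ : 0 ≤ γ) (hd : 0 < d) (hℓ0 : 0 ≤ ℓ) (hsum : 2*d + ℓ ≤ 2*π)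
    (L : ℕ → ℝ) (hL0 : ∀ k, 0 ≤ L k) (hLle : ∀ k, L k ≤ ℓ)
    (hLlb : ∀ k, ℓ - π/2^k ≤ L k) :
    TauTendstoC (fun k => hTrap γ d (L k) 0) (hTrap γ d ℓ 0) := by
  have hsumk : ∀ k, 2*d + L k ≤ 2*π := fun k => by linarith [hLle k]
  have htend : Tendsto L atTop (𝓝 ℓ) := by
    have hlow : Tendsto (fun k : ℕ => ℓ - π/2^k) atTop (𝓝 (ℓ - 0)) :=
      tendsto_const_nhds.sub pow_half_tendsto
    rw [sub_zero] at hlow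
    exact tendsto_of_tendsto_of_tendsto_of_le_of_le hlow tendsto_const_nhds hLlb hLle
  refine ⟨?_, ⟨γ, fun k => deriv_bound hγ hd (hL0 k) (hsumk k)⟩, ?_⟩
  · -- uniform convergence
    rw [Metric.tendstoUniformly_iff]
    intro ε hε
    have h0 : Tendsto (fun k => γ * (π/2^k)) atTop (𝓝 0) := by
      have := pow_half_tendsto.const_mul γ
      rwa [mul_zero] at this
    filter_upwards [h0.eventually (gt_mem_nhds hε)] with k hk x
    rw [Real.dist_eq, hTrap_eq γ d ℓ 0 x hγ, hTrap_eq γ d (L k) 0 x hγ, ← mul_sub,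
      abs_mul, abs_of_nonneg hγ]
    calc γ * |qr d ℓ _ - qr d (L k) _| ≤ γ * |ℓ - L k| :=
          mul_le_mul_of_nonneg_left (qr_lip_l d ℓ (L k) _) hγ
      _ ≤ γ * (π/2^k) := by
          apply mul_le_mul_of_nonneg_left _ hγ
          rw [abs_of_nonneg (by linarith [hLle k])]
          linarith [hLlb k]
      _ < ε := hk
  · -- a.e. convergence of derivatives
    rw [ae_restrict_iff' measurableSet_Ioc]
    have hfin : volume ({d, d+ℓ, 2*d+ℓ, 2*π} : Set ℝ) = 0 :=
      (Set.toFinite _).measure_zero _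
    filter_upwards [measure_eq_zero_iff_ae_notMem.mp hfin] with t htn htIoc
    simp only [Set.mem_insert_iff, Set.mem_singleton_iff, not_or] at htn
    obtain ⟨h1, h2, h3, h4⟩ := htn
    obtain ⟨ht0, ht2⟩ := htIoc
    have ht2' : t < 2*π := lt_of_le_of_ne ht2 h4
    rcases lt_trichotomy t d with hc | hc | hc
    · rw [deriv_rise hγ hd hℓ0 hsum ⟨ht0, hc⟩]
      have he : (fun k => deriv (hTrap γ d (L k) 0) t) = fun _ => γ :=
        funext fun k => deriv_rise hγ hd (hL0 k) (hsumk k) ⟨ht0, hc⟩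
      rw [he]; exact tendsto_const_nhds
    · exact absurd hc h1
    · rcases lt_trichotomy t (d+ℓ) with hc2 | hc2 | hc2
      · rw [deriv_plateau hγ hd hℓ0 hsum ⟨hc, hc2⟩]
        have hev : ∀ᶠ k in atTop, t - d < L k :=
          htend.eventually (eventually_gt_nhds (by linarith))
        apply Tendsto.congr' _ (tendsto_const_nhds (x := (0:ℝ)))
        filter_upwards [hev] with k hk
        exact (deriv_plateau hγ hd (hL0 k) (hsumk k) ⟨hc, by linarith⟩).symm
      · exact absurd hc2 h2
      · rcases lt_trichotomy t (2*d+ℓ) with hc3 | hc3 | hc3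
        · rw [deriv_fall hγ hd hℓ0 hsum ⟨hc2, hc3⟩]
          have hev : ∀ᶠ k in atTop, t - 2*d < L k :=
            htend.eventually (eventually_gt_nhds (by linarith))
          apply Tendsto.congr' _ (tendsto_const_nhds (x := (-γ:ℝ)))
          filter_upwards [hev] with k hk
          exact (deriv_fall hγ hd (hL0 k) (hsumk k)
            ⟨by linarith [hLle k], by linarith⟩).symm
        · exact absurd hc3 h3
        · rw [deriv_tail hγ hd hℓ0 hsum ⟨hc3, ht2'⟩]
          have he : (fun k => deriv (hTrap γ d (L k) 0) t) = fun _ => (0:ℝ) :=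
            funext fun k => deriv_tail hγ hd (hL0 k) (hsumk k)
              ⟨by linarith [hLle k], ht2'⟩
          rw [he]; exact tendsto_const_nhds

end Conv

/-- Main lemma: independence of the plateau length at position `0`. -/
lemma val_indep (W : (ℝ → ℝ) → ℝ) (hval : IsValC W) (hτ : TauContC W) (hrot : RotInvC W)
    (hconst : ∀ lam : ℝ, W (fun _ => lam) = 0) (γ d ℓ : ℝ)
    (hγ : 0 ≤ γ) (hd : 0 < d) (hd2 : d ≤ π/2) (hℓ0 : 0 ≤ ℓ) (hℓ : ℓ ≤ 2*π - 2*d) :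
    W (hTrap γ d ℓ 0) = W (hTrap γ d 0 0) := by
  have hπ := Real.pi_pos
  have hsum : 2*d + ℓ ≤ 2*π := by linarith
  set L : ℕ → ℝ := fun k => (⌊ℓ * 2^k / π⌋₊ : ℝ) * (π/2^k) with hLdef
  have hq : ∀ k : ℕ, (0:ℝ) < π/2^k := fun k => by positivity
  have hL0 : ∀ k, 0 ≤ L k := fun k => mul_nonneg (Nat.cast_nonneg _) (hq k).le
  have harg : ∀ k : ℕ, (0:ℝ) ≤ ℓ * 2^k / π := fun k => by positivity
  have hLle : ∀ k, L k ≤ ℓ := by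
    intro k
    have h1 : (⌊ℓ * 2^k / π⌋₊ : ℝ) ≤ ℓ * 2^k / π := Nat.floor_le (harg k)
    have h2 : (⌊ℓ * 2^k / π⌋₊ : ℝ) * (π/2^k) ≤ (ℓ * 2^k / π) * (π/2^k) :=
      mul_le_mul_of_nonneg_right h1 (hq k).le
    calc L k ≤ (ℓ * 2^k / π) * (π/2^k) := h2
      _ = ℓ := by field_simp
  have hLlb : ∀ k, ℓ - π/2^k ≤ L k := by
    intro k
    have h1 : ℓ * 2^k / π < (⌊ℓ * 2^k / π⌋₊ : ℝ) + 1 := Nat.lt_floor_add_one _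
    have h2 : (ℓ * 2^k / π) * (π/2^k) ≤ ((⌊ℓ * 2^k / π⌋₊ : ℝ) + 1) * (π/2^k) :=
      mul_le_mul_of_nonneg_right h1.le (hq k).le
    have h3 : (ℓ * 2^k / π) * (π/2^k) = ℓ := by field_simp
    rw [h3] at h2
    have h4 : ((⌊ℓ * 2^k / π⌋₊ : ℝ) + 1) * (π/2^k) = L k + π/2^k := by ring
    linarith [h2, h4.symm.le]
  have hWk : ∀ k, W (hTrap γ d (L k) 0) = W (hTrap γ d 0 0) := by
    intro k
    exact val_multiple W hval hrot hconst γ d hγ hd hd2 k _ (le_trans (hLle k) (by linarith))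
  have hlip : ∀ k, LipC (hTrap γ d (L k) 0) :=
    fun k => hTrap_lipc γ d (L k) 0 hγ hd (hL0 k) (by linarith [hLle k])
  have hlipf : LipC (hTrap γ d ℓ 0) := hTrap_lipc γ d ℓ 0 hγ hd hℓ0 hsum
  have hten := hτ _ _ hlip hlipf (tau_conv hγ hd hℓ0 hsum L hL0 hLle hLlb)
  have hconstseq : (fun k => W (hTrap γ d (L k) 0)) = fun _ => W (hTrap γ d 0 0) :=
    funext hWk
  rw [hconstseq] at hten
  exact (tendsto_nhds_unique tendsto_const_nhds hten).symm

end PlateauAux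

/-- a τ-continuous rotation-invariant valuation `W` on `Lip(S¹)` that
vanishes on constants does not see the plateau length `ℓ` nor the position `t₀` of the
trapezoidal functions: `W(h_{γ,d,ℓ,t₀}) = W(h_{γ,d,0,0})`. -/
theorem valuation_trapezoid_independent_of_plateau (W : (ℝ → ℝ) → ℝ)
    (hval : IsValC W) (hτ : TauContC W) (hrot : RotInvC W)
    (hconst : ∀ lam : ℝ, W (fun _ => lam) = 0)
    (γ d ℓ t₀ : ℝ) (hγ : 0 ≤ γ) (hd : 0 < d) (hd2 : d ≤ Real.pi / 2)
    (hℓ0 : 0 ≤ ℓ) (hℓ : ℓ ≤ 2 * (Real.pi - d)) (ht₀ : t₀ ∈ Set.Icc 0 (2 * Real.pi)) :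
    W (hTrap γ d ℓ t₀) = W (hTrap γ d 0 0) := by
  have hπ := Real.pi_pos
  have hsum : 2*d + ℓ ≤ 2*Real.pi := by linarith
  have h1 : W (hTrap γ d ℓ t₀) = W (hTrap γ d ℓ 0) :=
    PlateauAux.rot_indep W hrot γ d ℓ t₀ hγ hd hℓ0 hsum
  have h2 := PlateauAux.val_indep W hval hτ hrot hconst γ d ℓ hγ hd hd2 hℓ0 (by linarith)
  rw [h1, h2]
end
end

section
/- Let V: Lip(S¹) → ℝ be a τ-continuous rotation-invariant valuation vanishing on constants, let g ∈ 𝓛(S¹) be piecewise linear and symmetric with respect to π, and for (a,b] ⊂ [0,π] set ν_g((a,b]) = V(g_{ab}), where g_{ab} equals g(a) on [0,a] ∪ (2π−a,2π], g on (a,b] ∪ (2π−b,2π−a], and g(b) on (b,2π−b]. Then ν_g is well-defined and finitely additive on the algebra generated by the semi-open subintervals of [0,π]: in particular ν_g((a,b]) + ν_g((b,c]) = ν_g((a,c]) for a ≤ b ≤ c. -/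
open MeasureTheory Set Filter Topology Classical
open scoped ENNReal NNReal

noncomputable section

/-- Reduction of `t ∈ ℝ` modulo `2π` into `[0, 2π)`. -/
noncomputable def circReduce (t : ℝ) : ℝ := 2 * Real.pi * Int.fract (t / (2 * Real.pi))

/-- For `g` symmetric with respect to `π`, the function `g_{ab}` equal to `g(a)` on
`[0,a] ∪ (2π−a,2π]`, to `g` on `(a,b] ∪ (2π−b,2π−a]`, and to `g(b)` on `(b,2π−b]`. -/
noncomputable def gab (g : ℝ → ℝ) (a b : ℝ) (t : ℝ) : ℝ :=
  g (max a (min b (min (circReduce t) (2 * Real.pi - circReduce t))))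

/-- `f` is piecewise linear on `[0, 2π]`. -/
def IsPWLinear (f : ℝ → ℝ) : Prop :=
  ∃ (N : ℕ) (p : Fin (N + 1) → ℝ), StrictMono p ∧ p 0 = 0 ∧
    p (Fin.last N) = 2 * Real.pi ∧
    ∀ i : Fin N, ∃ α β : ℝ, ∀ t ∈ Set.Icc (p i.castSucc) (p i.succ), f t = α * t + β

/-- `s` is a finite union of semi-open subintervals of `[0, π]` (the members of the
algebra generated by the semi-open intervals of `[0, π]`). -/
def IsIocUnion (s : Set ℝ) : Prop :=
  ∃ F : Finset (ℝ × ℝ), (∀ q ∈ F, 0 ≤ q.1 ∧ q.1 ≤ q.2 ∧ q.2 ≤ Real.pi) ∧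
    s = ⋃ q ∈ F, Set.Ioc q.1 q.2

noncomputable def distC (t : ℝ) : ℝ := min (circReduce t) (2 * Real.pi - circReduce t)

lemma two_pi_pos : (0:ℝ) < 2 * Real.pi := by positivity

lemma distC_eq (t : ℝ) : distC t = |t - 2 * Real.pi * round (t / (2 * Real.pi))| := by
  have h2π : (0:ℝ) < 2 * Real.pi := two_pi_pos
  set u := t / (2 * Real.pi) with hu
  have ht : t = 2 * Real.pi * u := by rw [hu]; field_simp
  have h1 : distC t = 2 * Real.pi * min (Int.fract u) (1 - Int.fract u) := by
    rw [distC, circReduce, ← hu, mul_min_of_nonneg _ _ h2π.le, mul_sub, mul_one]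
  rw [h1, ← abs_sub_round_eq_min, ht, ← mul_sub, abs_mul, abs_of_pos h2π]

lemma distC_le (t : ℝ) (n : ℤ) : distC t ≤ |t - 2 * Real.pi * n| := by
  have h2π : (0:ℝ) < 2 * Real.pi := two_pi_pos
  rw [distC_eq]
  have habs : ∀ x : ℝ, 2 * Real.pi * |t / (2 * Real.pi) - x| = |t - 2 * Real.pi * x| := by
    intro x
    have hx : 2 * Real.pi * (t / (2 * Real.pi) - x) = t - 2 * Real.pi * x := by
      field_simp
    calc 2 * Real.pi * |t / (2 * Real.pi) - x|
        = |2 * Real.pi| * |t / (2 * Real.pi) - x| := by rw [abs_of_pos h2π]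
      _ = |2 * Real.pi * (t / (2 * Real.pi) - x)| := (abs_mul _ _).symm
      _ = |t - 2 * Real.pi * x| := by rw [hx]
  rw [← habs, ← habs]
  exact mul_le_mul_of_nonneg_left (round_le (t / (2 * Real.pi)) n) h2π.le

lemma distC_lipschitz : LipschitzWith 1 distC := by
  apply LipschitzWith.mk_one
  intro s t
  rw [Real.dist_eq, Real.dist_eq]
  have key : ∀ x y : ℝ, distC x ≤ |x - y| + distC y := by
    intro x y
    calc distC x ≤ |x - 2 * Real.pi * round (y / (2 * Real.pi))| := distC_le x _
      _ = |(x - y) + (y - 2 * Real.pi * round (y / (2 * Real.pi)))| := by ring_nf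
      _ ≤ |x - y| + |y - 2 * Real.pi * round (y / (2 * Real.pi))| := abs_add_le _ _
      _ = |x - y| + distC y := by rw [distC_eq]
  rw [abs_sub_le_iff]
  constructor
  · have := key s t; linarith [this]
  · have := key t s; rw [abs_sub_comm] at this; linarith [this]

lemma clamp_lipschitz (a b : ℝ) : LipschitzWith 1 (fun m : ℝ => max a (min b m)) := by
  apply LipschitzWith.mk_one
  intro x y
  rw [Real.dist_eq, Real.dist_eq]
  calc |max a (min b x) - max a (min b y)|
      = |max (min b x) a - max (min b y) a| := by rw [max_comm a, max_comm a]
    _ ≤ |min b x - min b y| := abs_max_sub_max_le_abs _ _ _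
    _ ≤ max |b - b| |x - y| := abs_min_sub_min_le_max _ _ _ _
    _ ≤ |x - y| := by simp

lemma gab_lipC (g : ℝ → ℝ) (hg : LipC g) (a b : ℝ) : LipC (gab g a b) := by
  obtain ⟨hper, L, hL⟩ := hg
  constructor
  · intro t
    have h2π : (2 * Real.pi) ≠ 0 := two_pi_pos.ne'
    have : circReduce (t + 2 * Real.pi) = circReduce t := by
      rw [circReduce, circReduce]
      congr 1
      rw [add_div, div_self h2π, Int.fract_add_one]
    simp only [gab, this]
  · refine ⟨L, ?_⟩
    have : gab g a b = g ∘ (fun m : ℝ => max a (min b m)) ∘ distC := rfl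
    rw [this]
    simpa using (hL.comp ((clamp_lipschitz a b).comp distC_lipschitz))

lemma const_lipC (c : ℝ) : LipC (fun _ => c) :=
  ⟨fun _ => rfl, 0, LipschitzWith.const' c⟩

lemma gab_pair (g : ℝ → ℝ) {a b c : ℝ} (hab : a ≤ b) (hbc : b ≤ c) (t : ℝ) :
    max (gab g a b t) (gab g b c t) = max (gab g a c t) (g b) ∧
    min (gab g a b t) (gab g b c t) = min (gab g a c t) (g b) := by
  unfold gab
  set m := min (circReduce t) (2 * Real.pi - circReduce t) with hm
  rcases le_total m b with h | h
  · have h1 : max b (min c m) = b :=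
      max_eq_left (le_trans (min_le_right _ _) h)
    have h2 : min b m = min c m := by
      rw [min_eq_right h, min_eq_right (le_trans h hbc)]
    rw [h1, h2]
    exact ⟨rfl, rfl⟩
  · have hbm : b ≤ min c m := le_min hbc h
    have h1 : max a (min b m) = b := by rw [min_eq_left h, max_eq_right hab]
    have h2 : max b (min c m) = max a (min c m) := by
      rw [max_eq_right hbm, max_eq_right (le_trans hab hbm)]
    rw [h1, h2]
    exact ⟨max_comm _ _, min_comm _ _⟩

noncomputable def stepF (x t : ℝ) : ℝ := if x < t then 1 else 0

def RepC (s : Set ℝ) (c : ℝ →₀ ℝ) : Prop :=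
  ∀ t : ℝ, (if t ∈ s then (1:ℝ) else 0) = c.sum fun x a => a * stepF x t

lemma repC_zero (c : ℝ →₀ ℝ) (h : ∀ t : ℝ, c.sum (fun x a => a * stepF x t) = 0) :
    c = 0 := by
  by_contra hc
  have hsupp : c.support.Nonempty := Finsupp.support_nonempty_iff.mpr hc
  set m := c.support.min' hsupp with hm
  have hmem : m ∈ c.support := c.support.min'_mem hsupp
  obtain ⟨t0, ht0, ht0'⟩ :
      ∃ t0 : ℝ, m < t0 ∧ ∀ x ∈ c.support, x ≠ m → t0 ≤ x := by
    by_cases hr : (c.support.erase m).Nonempty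
    · have h2 := (c.support.erase m).min'_mem hr
      have h1 : m < (c.support.erase m).min' hr :=
        lt_of_le_of_ne (c.support.min'_le _ (Finset.mem_of_mem_erase h2))
          (Ne.symm (Finset.ne_of_mem_erase h2))
      refine ⟨(m + (c.support.erase m).min' hr) / 2, by linarith, ?_⟩
      intro x hx hxm
      have h3 : (c.support.erase m).min' hr ≤ x :=
        (c.support.erase m).min'_le x (Finset.mem_erase.mpr ⟨hxm, hx⟩)
      linarith
    · refine ⟨m + 1, by linarith, ?_⟩
      intro x hx hxm
      rw [Finset.not_nonempty_iff_eq_empty] at hr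
      exact absurd (hr ▸ Finset.mem_erase.mpr ⟨hxm, hx⟩) (Finset.notMem_empty x)
  have key := h t0
  rw [Finsupp.sum, Finset.sum_eq_single_of_mem m hmem
    (fun b hb hbm => by rw [stepF, if_neg (not_lt.mpr (ht0' b hb hbm)), mul_zero])] at key
  rw [stepF, if_pos ht0, mul_one] at key
  exact (Finsupp.mem_support_iff.mp hmem) key

lemma repC_unique {s : Set ℝ} {c c' : ℝ →₀ ℝ} (h : RepC s c) (h' : RepC s c') : c = c' := by
  have hz : c - c' = 0 := by
    apply repC_zero
    intro t
    rw [Finsupp.sum_sub_index (fun x b₁ b₂ => sub_mul b₁ b₂ (stepF x t)),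
      ← h t, ← h' t]
    ring
  exact sub_eq_zero.mp hz

lemma repC_Ioc' {a b : ℝ} (hab : a ≤ b) :
    RepC (Set.Ioc a b) (Finsupp.single a 1 - Finsupp.single b 1) := by
  intro t
  have e1 : (Finsupp.single a (1:ℝ)).sum (fun x r => r * stepF x t) = stepF a t := by
    rw [Finsupp.sum_single_index (h := fun x r => r * stepF x t) (zero_mul _), one_mul]
  have e2 : (Finsupp.single b (1:ℝ)).sum (fun x r => r * stepF x t) = stepF b t := by
    rw [Finsupp.sum_single_index (h := fun x r => r * stepF x t) (zero_mul _), one_mul]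
  rw [Finsupp.sum_sub_index (fun x b₁ b₂ => sub_mul b₁ b₂ (stepF x t)), e1, e2, stepF, stepF]
  simp only [Set.mem_Ioc]
  rcases lt_or_ge a t with h1 | h1
  · rcases lt_or_ge b t with h2 | h2
    · rw [if_neg (by rintro ⟨_, hh⟩; linarith), if_pos h1, if_pos h2]; norm_num
    · rw [if_pos ⟨h1, h2⟩, if_pos h1, if_neg (not_lt.mpr h2)]; norm_num
  · rw [if_neg (by rintro ⟨hh, _⟩; linarith), if_neg (not_lt.mpr h1),
      if_neg (not_lt.mpr (h1.trans hab))]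
    norm_num

lemma repC_Ioc (a b : ℝ) : ∃ c, RepC (Set.Ioc a b) c := by
  rcases le_or_gt a b with hab | hab
  · exact ⟨_, repC_Ioc' hab⟩
  · refine ⟨0, fun t => ?_⟩
    rw [Finsupp.sum_zero_index, if_neg]
    rintro ⟨h1, h2⟩
    linarith

lemma repC_union_aux : ∀ n (F : Finset (ℝ × ℝ)), F.card ≤ n →
    ∃ c, RepC (⋃ q ∈ F, Set.Ioc q.1 q.2) c := by
  intro n
  induction n with
  | zero =>
    intro F hF
    have hFe : F = ∅ := Finset.card_eq_zero.mp (le_antisymm hF (Nat.zero_le _))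
    subst hFe
    refine ⟨0, fun t => ?_⟩
    simp [Finsupp.sum_zero_index]
  | succ n ih =>
    intro F hF
    rcases F.eq_empty_or_nonempty with rfl | hne
    · refine ⟨0, fun t => ?_⟩
      simp [Finsupp.sum_zero_index]
    obtain ⟨q, hq⟩ := hne
    set F' := F.erase q with hF'
    have hcard : F'.card ≤ n := by
      have h1 : F'.card = F.card - 1 := by
        rw [hF']; exact Finset.card_erase_of_mem hq
      have h2 : 1 ≤ F.card := Finset.card_pos.mpr ⟨q, hq⟩
      omega
    obtain ⟨cB, hB⟩ := ih F' hcard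
    obtain ⟨cA, hA⟩ := repC_Ioc q.1 q.2
    set G := F'.image (fun q' : ℝ × ℝ => (max q.1 q'.1, min q.2 q'.2)) with hG
    have hGcard : G.card ≤ n := le_trans Finset.card_image_le hcard
    obtain ⟨cI, hI⟩ := ih G hGcard
    refine ⟨cA + cB - cI, fun t => ?_⟩
    have e1 : (cA + cB - cI).sum (fun x a => a * stepF x t)
        = (cA + cB).sum (fun x a => a * stepF x t) - cI.sum (fun x a => a * stepF x t) :=
      Finsupp.sum_sub_index (fun x b₁ b₂ => sub_mul b₁ b₂ (stepF x t))
    have e2 : (cA + cB).sum (fun x a => a * stepF x t)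
        = cA.sum (fun x a => a * stepF x t) + cB.sum (fun x a => a * stepF x t) :=
      Finsupp.sum_add_index' (fun x => zero_mul _) (fun x b₁ b₂ => add_mul b₁ b₂ _)
    rw [e1, e2, ← hA t, ← hB t, ← hI t]
    have hUF : (t ∈ ⋃ q'' ∈ F, Set.Ioc q''.1 q''.2) ↔
        (t ∈ Set.Ioc q.1 q.2 ∨ t ∈ ⋃ q' ∈ F', Set.Ioc q'.1 q'.2) := by
      conv_lhs => rw [← Finset.insert_erase hq]
      simp [Set.mem_iUnion, ← hF']
    have hGiff : (t ∈ ⋃ q' ∈ G, Set.Ioc q'.1 q'.2) ↔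
        (t ∈ Set.Ioc q.1 q.2 ∧ t ∈ ⋃ q' ∈ F', Set.Ioc q'.1 q'.2) := by
      simp only [Set.mem_iUnion, exists_prop, hG, Finset.mem_image, Set.mem_Ioc]
      constructor
      · rintro ⟨p, ⟨q', hq', rfl⟩, h1, h2⟩
        rw [max_lt_iff] at h1
        rw [le_min_iff] at h2
        exact ⟨⟨h1.1, h2.1⟩, ⟨q', hq', h1.2, h2.2⟩⟩
      · rintro ⟨⟨h1, h2⟩, q', hq', h3, h4⟩
        refine ⟨(max q.1 q'.1, min q.2 q'.2), ⟨q', hq', rfl⟩, ?_, ?_⟩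
        · rw [max_lt_iff]; exact ⟨h1, h3⟩
        · rw [le_min_iff]; exact ⟨h2, h4⟩
    by_cases hP : t ∈ Set.Ioc q.1 q.2 <;>
      by_cases hQ : t ∈ ⋃ q' ∈ F', Set.Ioc q'.1 q'.2 <;>
      simp [hUF, hGiff, hP, hQ]

noncomputable def nuE (w : ℝ → ℝ) (c : ℝ →₀ ℝ) : ℝ := c.sum fun x a => a * w x

noncomputable def nuF (w : ℝ → ℝ) (s : Set ℝ) : ℝ :=
  if h : ∃ c, RepC s c then nuE w (Classical.choose h) else 0

lemma nuF_eq (w : ℝ → ℝ) {s : Set ℝ} {c : ℝ →₀ ℝ} (h : RepC s c) : nuF w s = nuE w c := by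
  have hex : ∃ c, RepC s c := ⟨c, h⟩
  simp only [nuF, dif_pos hex]
  congr 1
  exact repC_unique (Classical.choose_spec hex) h

/-- for a τ-continuous rotation-invariant valuation `V` vanishing on
constants and a piecewise linear `g` symmetric with respect to `π`, the set function
`ν_g((a,b]) = V(g_{ab})` is well-defined and finitely additive on the algebra generated
by the semi-open subintervals of `[0,π]`; in particular
`ν_g((a,b]) + ν_g((b,c]) = ν_g((a,c])`. -/
theorem nu_g_well_defined_and_additive (V : (ℝ → ℝ) → ℝ)
    (hval : IsValC V) (hτ : TauContC V) (hrot : RotInvC V)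
    (hconst : ∀ lam : ℝ, V (fun _ => lam) = 0)
    (g : ℝ → ℝ) (hg : LipC g) (hpl : IsPWLinear g)
    (hsym : ∀ t, g t = g (2 * Real.pi - t)) :
    (∀ a b c : ℝ, 0 ≤ a → a ≤ b → b ≤ c → c ≤ Real.pi →
      V (gab g a b) + V (gab g b c) = V (gab g a c)) ∧
    ∃ ν : Set ℝ → ℝ, ν ∅ = 0 ∧
      (∀ a b : ℝ, 0 ≤ a → a ≤ b → b ≤ Real.pi → ν (Set.Ioc a b) = V (gab g a b)) ∧
      (∀ s t : Set ℝ, IsIocUnion s → IsIocUnion t → Disjoint s t →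
        ν (s ∪ t) = ν s + ν t) := by
  have hadd : ∀ a b c : ℝ, a ≤ b → b ≤ c →
      V (gab g a b) + V (gab g b c) = V (gab g a c) := by
    intro a b c hab hbc
    have L1 := hval (gab g a b) (gab g b c) (gab_lipC g hg a b) (gab_lipC g hg b c)
    have L2 := hval (gab g a c) (fun _ => g b) (gab_lipC g hg a c) (const_lipC (g b))
    have hsup : gab g a b ⊔ gab g b c = gab g a c ⊔ (fun _ => g b) := by
      funext u
      simpa [Pi.sup_apply] using (gab_pair g hab hbc u).1
    have hinf : gab g a b ⊓ gab g b c = gab g a c ⊓ (fun _ => g b) := by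
      funext u
      simpa [Pi.inf_apply] using (gab_pair g hab hbc u).2
    rw [hconst] at L2
    rw [hsup, hinf, L2] at L1
    linarith
  refine ⟨fun a b c _ hab hbc _ => hadd a b c hab hbc,
    nuF (fun x => -V (gab g 0 x)), ?_, ?_, ?_⟩
  · have hempty : RepC (∅ : Set ℝ) 0 := fun t => by
      simp [Finsupp.sum_zero_index]
    rw [nuF_eq _ hempty]
    simp [nuE, Finsupp.sum_zero_index]
  · intro a b h0 hab hπ
    rw [nuF_eq _ (repC_Ioc' hab)]
    have e0 : nuE (fun x => -V (gab g 0 x)) (Finsupp.single a 1 - Finsupp.single b 1)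
        = -V (gab g 0 a) - (-V (gab g 0 b)) := by
      rw [nuE, Finsupp.sum_sub_index
          (fun x b₁ b₂ => sub_mul b₁ b₂ ((fun x => -V (gab g 0 x)) x)),
        Finsupp.sum_single_index (h := fun x r => r * (fun x => -V (gab g 0 x)) x) (zero_mul _),
        Finsupp.sum_single_index (h := fun x r => r * (fun x => -V (gab g 0 x)) x) (zero_mul _),
        one_mul, one_mul]
    rw [e0]
    have := hadd 0 a b h0 hab
    linarith
  · rintro s t ⟨F, hFmem, rfl⟩ ⟨Ft, hFtmem, rfl⟩ hdisj
    obtain ⟨cs, hcs⟩ := repC_union_aux F.card F le_rfl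
    obtain ⟨ct, hct⟩ := repC_union_aux Ft.card Ft le_rfl
    have hun : RepC ((⋃ q ∈ F, Set.Ioc q.1 q.2) ∪ (⋃ q ∈ Ft, Set.Ioc q.1 q.2)) (cs + ct) := by
      intro u
      have e2 : (cs + ct).sum (fun x a => a * stepF x u)
          = cs.sum (fun x a => a * stepF x u) + ct.sum (fun x a => a * stepF x u) :=
        Finsupp.sum_add_index' (fun x => zero_mul _) (fun x b₁ b₂ => add_mul b₁ b₂ _)
      rw [e2, ← hcs u, ← hct u]
      by_cases h1 : u ∈ ⋃ q ∈ F, Set.Ioc q.1 q.2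
      · have h2 : u ∉ ⋃ q ∈ Ft, Set.Ioc q.1 q.2 := fun h2 => Set.disjoint_left.mp hdisj h1 h2
        simp [h1, h2]
      · by_cases h2 : u ∈ ⋃ q ∈ Ft, Set.Ioc q.1 q.2 <;> simp [h1, h2]
    rw [nuF_eq _ hun, nuF_eq _ hcs, nuF_eq _ hct]
    simp only [nuE]
    exact Finsupp.sum_add_index' (fun x => zero_mul _) (fun x b₁ b₂ => add_mul b₁ b₂ _)
end
end

section
/- Define V: Lip(S¹) → ℝ by V(f) = ∫₀^{2π} |f'(t)| · χ_{[1,∞)}(f(t)) dH¹(t). Then V is a rotation-invariant τ-continuous valuation on Lip(S¹), but V is not uniformly τ-continuous: there exist sequences f_m, g_m with uniformly bounded Lipschitz norm and d_τ(f_m, g_m) → 0 while V(f_m) = H¹([0,2π]) and V(g_m) = 0 for all m. -/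
open MeasureTheory Set Filter Topology Classical
open scoped ENNReal NNReal

noncomputable section

/-- The valuation `V(f) = ∫₀^{2π} |f'(t)|·χ_{[1,∞)}(f(t)) dH¹(t)`. -/
noncomputable def Vex (f : ℝ → ℝ) : ℝ :=
  ∫ t in (0 : ℝ)..(2 * Real.pi),
    |deriv f t| * Set.indicator (Set.Ici (1 : ℝ)) (fun _ => (1 : ℝ)) (f t)

/-- The metric `d_τ(f,g) = ‖f − g‖_∞ + ∫₀^{2π} |f' − g'| dH¹`. -/
noncomputable def dTauC (f g : ℝ → ℝ) : ℝ :=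
  (⨆ t : Set.Icc (0 : ℝ) (2 * Real.pi), |f t - g t|) +
    ∫ t in (0 : ℝ)..(2 * Real.pi), |deriv f t - deriv g t|

/-- `‖f‖ = max (‖f‖_∞, L(f)) ≤ M`. -/
def NormBoundC (M : ℝ) (f : ℝ → ℝ) : Prop :=
  (∀ t, |f t| ≤ M) ∧ LipschitzWith (Real.toNNReal M) f

/-- Uniform τ-continuity of a functional on `Lip(S¹)`. -/
def UnifTauContC (V : (ℝ → ℝ) → ℝ) : Prop :=
  ∀ ε : ℝ, 0 < ε → ∀ M : ℝ, 0 < M → ∃ δ : ℝ, 0 < δ ∧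
    ∀ f g : ℝ → ℝ, LipC f → LipC g → NormBoundC M f → NormBoundC M g →
      dTauC f g < δ → |V f - V g| < ε


lemma aux_countable_isolated (s : Set ℝ) : {x | x ∈ s ∧ 𝓝[s \ {x}] x = ⊥}.Countable := by
  set T := {x | x ∈ s ∧ 𝓝[s \ {x}] x = ⊥} with hT
  have key : ∀ x ∈ T, ∃ p q : ℚ, (p : ℝ) < x ∧ x < q ∧ Ioo (p:ℝ) q ∩ s ⊆ {x} := by
    rintro x ⟨hxs, hx⟩
    have : (∅ : Set ℝ) ∈ 𝓝[s \ {x}] x := by rw [hx]; exact mem_bot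
    rw [mem_nhdsWithin] at this
    obtain ⟨u, hu, hxu, husub⟩ := this
    obtain ⟨ε, hε, hball⟩ := Metric.isOpen_iff.1 hu x hxu
    obtain ⟨p, hp1, hp2⟩ := exists_rat_btwn (show x - ε < x by linarith)
    obtain ⟨q, hq1, hq2⟩ := exists_rat_btwn (show x < x + ε by linarith)
    refine ⟨p, q, hp2, hq1, ?_⟩
    rintro y ⟨⟨hy1, hy2⟩, hys⟩
    by_contra hyx
    have hyball : y ∈ u := by
      apply hball
      rw [Real.ball_eq_Ioo]
      exact ⟨by linarith, by linarith⟩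
    exact (husub ⟨hyball, hys, hyx⟩)
  choose! p q hp hq hsub using key
  have hinj : Set.InjOn (fun x => (p x, q x)) T := by
    rintro x hx y hy hxy
    simp only [Prod.mk.injEq] at hxy
    by_contra hne
    have : y ∈ Ioo ((p x : ℝ)) (q x) ∩ s := by
      refine ⟨⟨?_, ?_⟩, hy.1⟩
      · rw [hxy.1]; exact hp y hy
      · rw [hxy.2]; exact hq y hy
    exact hne (((hsub x hx) this).symm)
  exact Set.countable_of_injective_of_countable_image hinj (Set.countable_univ.mono (Set.subset_univ _))

/-- Key: the derivative of any function vanishes a.e. on its zero set. -/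
lemma aux_deriv_zero (h : ℝ → ℝ) : ∀ᵐ t, h t = 0 → deriv h t = 0 := by
  set s := {x | h x = 0} with hs
  have hc := aux_countable_isolated s
  have hz : volume {x | x ∈ s ∧ 𝓝[s \ {x}] x = ⊥} = 0 := (hc.measure_zero _)
  rw [← compl_compl {x | x ∈ s ∧ 𝓝[s \ {x}] x = ⊥}] at hz
  have hae : ∀ᵐ t, t ∉ {x | x ∈ s ∧ 𝓝[s \ {x}] x = ⊥} := by
    rw [ae_iff]; simpa using hz
  filter_upwards [hae] with t ht h0
  by_cases hd : DifferentiableAt ℝ h t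
  · have hts : t ∈ s := h0
    have hne : 𝓝[s \ {t}] t ≠ ⊥ := fun hb => ht ⟨hts, hb⟩
    haveI : (𝓝[s \ {t}] t).NeBot := ⟨hne⟩
    have h1 : Tendsto (slope h t) (𝓝[s \ {t}] t) (𝓝 (deriv h t)) :=
      (hasDerivAt_iff_tendsto_slope.mp hd.hasDerivAt).mono_left
        (nhdsWithin_mono t (fun y hy => hy.2))
    have h2 : Tendsto (slope h t) (𝓝[s \ {t}] t) (𝓝 0) := by
      apply Tendsto.congr' _ tendsto_const_nhds
      filter_upwards [self_mem_nhdsWithin] with y hy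
      have hy0 : h y = 0 := hy.1
      simp [slope, hy0, h0]
    exact tendsto_nhds_unique h1 h2
  · exact deriv_zero_of_not_differentiableAt hd

lemma aux_hasDerivAt_sup {f g : ℝ → ℝ} {d t : ℝ} (hfg : f t = g t)
    (hf : HasDerivAt f d t) (hg : HasDerivAt g d t) : HasDerivAt (f ⊔ g) d t := by
  have hsum := hf.add hg
  have hsub := hf.sub hg
  have habs : (fun s => |f s - g s|) =o[𝓝 t] fun s => s - t := by
    have := (hasDerivAt_iff_isLittleO.mp hsub)
    simp only [hfg, sub_self, zero_smul, sub_zero] at this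
    simpa [hfg] using this.norm_left
  have h2 : HasDerivAt (fun s => (f s + g s + |f s - g s|) / 2) d t := by
    have : HasDerivAt (fun s => f s + g s + |f s - g s|) (2 * d) t := by
      have hA : HasDerivAt (fun s => f s + g s) (d + d) t := hf.add hg
      have hB : HasDerivAt (fun s => |f s - g s|) 0 t := by
        rw [hasDerivAt_iff_isLittleO]
        simp only [hfg, sub_self, abs_zero, zero_smul, sub_zero]
        simpa using habs
      have := hA.add hB
      exact this.congr_deriv (by ring)
    have := this.div_const 2
    simpa [mul_comm, mul_div_assoc] using this
  have heq : (f ⊔ g) = fun s => (f s + g s + |f s - g s|) / 2 := by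
    funext s
    rcases le_total (f s) (g s) with hle | hle
    · rw [Pi.sup_apply, max_eq_right hle, abs_of_nonpos (sub_nonpos.2 hle)]; ring
    · rw [Pi.sup_apply, max_eq_left hle, abs_of_nonneg (sub_nonneg.2 hle)]; ring
  rw [heq]; exact h2

lemma aux_hasDerivAt_inf {f g : ℝ → ℝ} {d t : ℝ} (hfg : f t = g t)
    (hf : HasDerivAt f d t) (hg : HasDerivAt g d t) : HasDerivAt (f ⊓ g) d t := by
  have habs : HasDerivAt (fun s => |f s - g s|) 0 t := by
    rw [hasDerivAt_iff_isLittleO]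
    simp only [hfg, sub_self, abs_zero, zero_smul, sub_zero]
    have := (hasDerivAt_iff_isLittleO.mp (hf.sub hg))
    simp only [hfg, sub_self, zero_smul, sub_zero] at this
    simpa [hfg] using this.norm_left
  have h2 : HasDerivAt (fun s => (f s + g s - |f s - g s|) / 2) d t := by
    have : HasDerivAt (fun s => f s + g s - |f s - g s|) (2 * d) t := by
      have := (hf.add hg).sub habs
      exact this.congr_deriv (by ring)
    have := this.div_const 2
    simpa [mul_comm, mul_div_assoc] using this
  have heq : (f ⊓ g) = fun s => (f s + g s - |f s - g s|) / 2 := by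
    funext s
    rcases le_total (f s) (g s) with hle | hle
    · rw [Pi.inf_apply, min_eq_left hle, abs_of_nonpos (sub_nonpos.2 hle)]; ring
    · rw [Pi.inf_apply, min_eq_right hle, abs_of_nonneg (sub_nonneg.2 hle)]; ring
  rw [heq]; exact h2

/-- The integrand of `Vex`. -/
def Dq (f : ℝ → ℝ) (t : ℝ) : ℝ :=
  |deriv f t| * Set.indicator (Set.Ici (1 : ℝ)) (fun _ => (1 : ℝ)) (f t)

lemma Dq_nonneg (f : ℝ → ℝ) (t : ℝ) : 0 ≤ Dq f t :=
  mul_nonneg (abs_nonneg _) (Set.indicator_nonneg (fun _ _ => zero_le_one) _)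

lemma Dq_le (f : ℝ → ℝ) (t : ℝ) : Dq f t ≤ |deriv f t| := by
  calc Dq f t ≤ |deriv f t| * 1 := by
        apply mul_le_mul_of_nonneg_left _ (abs_nonneg _)
        by_cases h : f t ∈ Set.Ici (1 : ℝ) <;> simp [Set.indicator_apply, h]
    _ = _ := mul_one _

lemma Dq_meas {f : ℝ → ℝ} (hf : Measurable f) : Measurable (Dq f) := by
  apply Measurable.mul
  · exact (measurable_deriv f).abs
  · have : (fun t => Set.indicator (Set.Ici (1 : ℝ)) (fun _ => (1 : ℝ)) (f t))
        = Set.indicator (f ⁻¹' Set.Ici 1) (fun _ => (1 : ℝ)) := by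
      funext t
      by_cases h : f t ∈ Set.Ici (1 : ℝ) <;>
        simp [Set.indicator_apply, h]
    rw [this]
    exact Measurable.indicator measurable_const (hf measurableSet_Ici)

lemma Dq_bound {f : ℝ → ℝ} {L : ℝ≥0} (hf : LipschitzWith L f) (t : ℝ) : |Dq f t| ≤ L := by
  rw [abs_of_nonneg (Dq_nonneg f t)]
  calc Dq f t ≤ |deriv f t| := Dq_le f t
    _ ≤ L := by simpa [Real.norm_eq_abs] using norm_deriv_le_of_lipschitz hf

lemma Dq_intervalIntegrable {f : ℝ → ℝ} {L : ℝ≥0} (hf : LipschitzWith L f) (a b : ℝ) :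
    IntervalIntegrable (Dq f) volume a b := by
  rw [intervalIntegrable_iff]
  haveI : IsFiniteMeasure (volume.restrict (Set.uIoc a b)) := by
    constructor
    rw [Measure.restrict_apply_univ]
    exact measure_Ioc_lt_top
  apply MeasureTheory.Integrable.mono' (integrable_const (L : ℝ))
  · exact ((Dq_meas hf.continuous.measurable).aestronglyMeasurable)
  · exact Filter.Eventually.of_forall fun t => by
      simpa [Real.norm_eq_abs] using Dq_bound hf t

lemma Vex_eq (f : ℝ → ℝ) : Vex f = ∫ t in (0 : ℝ)..(2 * Real.pi), Dq f t := rfl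

lemma Dq_congr {h1 h2 : ℝ → ℝ} {t : ℝ} (h : h1 =ᶠ[𝓝 t] h2) : Dq h1 t = Dq h2 t := by
  unfold Dq
  rw [h.deriv_eq, h.eq_of_nhds]

theorem Vex_isVal : ∀ f g : ℝ → ℝ, LipC f → LipC g →
    Vex (f ⊔ g) + Vex (f ⊓ g) = Vex f + Vex g := by
  intro f g hf hg
  obtain ⟨hfp, Lf, hLf⟩ := hf
  obtain ⟨hgp, Lg, hLg⟩ := hg
  have key : ∀ᵐ t, Dq (f ⊔ g) t + Dq (f ⊓ g) t = Dq f t + Dq g t := by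
    filter_upwards [aux_deriv_zero (f - g), hLf.ae_differentiableAt,
      hLg.ae_differentiableAt] with t h0 hdf hdg
    rcases lt_trichotomy (f t) (g t) with hlt | heq | hgt
    · have hev : ∀ᶠ s in 𝓝 t, f s < g s :=
        (hLf.continuous.continuousAt (x := t)).eventually_lt
          (hLg.continuous.continuousAt) hlt
      have h1 : (f ⊔ g) =ᶠ[𝓝 t] g := by
        filter_upwards [hev] with s hs
        exact max_eq_right hs.le
      have h2 : (f ⊓ g) =ᶠ[𝓝 t] f := by
        filter_upwards [hev] with s hs
        exact min_eq_left hs.le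
      rw [Dq_congr h1, Dq_congr h2, add_comm]
    · have hd0 : deriv (f - g) t = 0 := h0 (by simp [Pi.sub_apply, heq])
      have hdd : deriv g t = deriv f t := by
        have : deriv (f - g) t = deriv f t - deriv g t := by
          simpa using deriv_sub hdf hdg
        rw [this] at hd0
        linarith
      have hsup : HasDerivAt (f ⊔ g) (deriv f t) t :=
        aux_hasDerivAt_sup heq hdf.hasDerivAt (hdd ▸ hdg.hasDerivAt)
      have hinf : HasDerivAt (f ⊓ g) (deriv f t) t :=
        aux_hasDerivAt_inf heq hdf.hasDerivAt (hdd ▸ hdg.hasDerivAt)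
      have e1 : (f ⊔ g) t = f t := by simp [Pi.sup_apply, heq]
      have e2 : (f ⊓ g) t = g t := by simp [Pi.inf_apply, heq]
      unfold Dq
      rw [hsup.deriv, hinf.deriv, e1, e2, hdd]
    · have hev : ∀ᶠ s in 𝓝 t, g s < f s :=
        (hLg.continuous.continuousAt (x := t)).eventually_lt
          (hLf.continuous.continuousAt) hgt
      have h1 : (f ⊔ g) =ᶠ[𝓝 t] f := by
        filter_upwards [hev] with s hs
        exact max_eq_left hs.le
      have h2 : (f ⊓ g) =ᶠ[𝓝 t] g := by
        filter_upwards [hev] with s hs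
        exact min_eq_right hs.le
      rw [Dq_congr h1, Dq_congr h2]
  have hsupLip : LipschitzWith (Lf ⊔ Lg) (f ⊔ g) := hLf.max hLg
  have hinfLip : LipschitzWith (Lf ⊔ Lg) (f ⊓ g) := hLf.min hLg
  have i1 := Dq_intervalIntegrable hsupLip 0 (2 * Real.pi)
  have i2 := Dq_intervalIntegrable hinfLip 0 (2 * Real.pi)
  have i3 := Dq_intervalIntegrable hLf 0 (2 * Real.pi)
  have i4 := Dq_intervalIntegrable hLg 0 (2 * Real.pi)
  rw [Vex_eq, Vex_eq, Vex_eq, Vex_eq, ← intervalIntegral.integral_add i1 i2,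
    ← intervalIntegral.integral_add i3 i4]
  apply intervalIntegral.integral_congr_ae
  filter_upwards [key] with t ht _
  exact ht

theorem Vex_rotInv : ∀ (c : ℝ) (f : ℝ → ℝ), LipC f →
    Vex (fun t => f (t + c)) = Vex f := by
  intro c f hf
  obtain ⟨hfp, L, hL⟩ := hf
  have hstep : Vex (fun t => f (t + c)) = ∫ t in (0:ℝ)..(2*Real.pi), Dq f (t + c) := by
    rw [Vex_eq]
    apply intervalIntegral.integral_congr
    intro t _
    unfold Dq
    rw [deriv_comp_add_const]
  have hper : Function.Periodic (Dq f) (2 * Real.pi) := by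
    intro x
    unfold Dq
    have hdp : deriv f (x + 2 * Real.pi) = deriv f x := by
      have hfun : (fun s => f (s + 2 * Real.pi)) = f := funext fun s => hfp s
      calc deriv f (x + 2 * Real.pi) = deriv (fun s => f (s + 2 * Real.pi)) x :=
            (deriv_comp_add_const f (2 * Real.pi) x).symm
        _ = deriv f x := by rw [hfun]
    rw [hdp, hfp x]
  rw [hstep, intervalIntegral.integral_comp_add_right (Dq f) c, Vex_eq]
  have := hper.intervalIntegral_add_eq c 0
  simpa [add_comm, zero_add] using this

theorem Vex_tauCont : ∀ (fk : ℕ → ℝ → ℝ) (f : ℝ → ℝ), (∀ k, LipC (fk k)) → LipC f →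
    (TendstoUniformly fk f atTop ∧
      (∃ C : ℝ, ∀ k, ∀ᵐ t ∂(volume.restrict (Set.Ioc 0 (2 * Real.pi))),
        |deriv (fk k) t| ≤ C) ∧
      (∀ᵐ t ∂(volume.restrict (Set.Ioc 0 (2 * Real.pi))),
        Tendsto (fun k => deriv (fk k) t) atTop (𝓝 (deriv f t)))) →
    Tendsto (fun k => Vex (fk k)) atTop (𝓝 (Vex f)) := by
  rintro fk f hfk hf ⟨hu, ⟨C, hC⟩, hd⟩
  have hIoc : Set.uIoc (0:ℝ) (2 * Real.pi) = Set.Ioc 0 (2 * Real.pi) :=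
    uIoc_of_le (by positivity)
  simp only [Vex_eq]
  apply intervalIntegral.tendsto_integral_filter_of_dominated_convergence (fun _ => C)
  · filter_upwards with k
    exact (Dq_meas (hfk k).2.choose_spec.continuous.measurable).aestronglyMeasurable
  · filter_upwards with k
    have := (ae_restrict_iff' measurableSet_Ioc).mp (hC k)
    rw [hIoc]
    filter_upwards [this] with t ht hmem
    rw [Real.norm_eq_abs, abs_of_nonneg (Dq_nonneg _ _)]
    exact (Dq_le _ _).trans (ht hmem)
  · exact intervalIntegrable_const
  · rw [hIoc]
    have hd' := (ae_restrict_iff' measurableSet_Ioc).mp hd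
    have h1 : ∀ᵐ t : ℝ, f t = 1 → deriv f t = 0 := by
      filter_upwards [aux_deriv_zero (fun s => f s - 1)] with t ht h1
      have := ht (by rw [h1]; ring)
      rwa [deriv_sub_const] at this
    filter_upwards [hd', h1] with t hdt h1t hmem
    have hptw : Tendsto (fun k => fk k t) atTop (𝓝 (f t)) := hu.tendsto_at t
    rcases lt_trichotomy (f t) 1 with hlt | heq | hgt
    · have hev : ∀ᶠ k in atTop, fk k t < 1 := hptw.eventually (eventually_lt_nhds hlt)
      have : (fun k => Dq (fk k) t) =ᶠ[atTop] fun _ => (0:ℝ) := by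
        filter_upwards [hev] with k hk
        unfold Dq
        rw [Set.indicator_of_notMem (by simpa using hk.not_ge), mul_zero]
      rw [show Dq f t = 0 by
        unfold Dq
        rw [Set.indicator_of_notMem (by simpa using hlt.not_ge), mul_zero]]
      exact Tendsto.congr' this.symm tendsto_const_nhds
    · have h0 : deriv f t = 0 := h1t heq
      rw [show Dq f t = 0 by unfold Dq; rw [h0]; simp]
      have habs : Tendsto (fun k => |deriv (fk k) t|) atTop (𝓝 0) := by
        simpa [h0] using (hdt hmem).abs
      apply squeeze_zero (fun k => Dq_nonneg _ _) (fun k => Dq_le _ _) habs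
    · have hev : ∀ᶠ k in atTop, 1 < fk k t := hptw.eventually (eventually_gt_nhds hgt)
      have hcong : (fun k => Dq (fk k) t) =ᶠ[atTop] fun k => |deriv (fk k) t| := by
        filter_upwards [hev] with k hk
        unfold Dq
        rw [Set.indicator_of_mem (by simpa using hk.le), mul_one]
      have htgt : Dq f t = |deriv f t| := by
        unfold Dq
        rw [Set.indicator_of_mem (by simpa using hgt.le), mul_one]
      rw [htgt]
      exact Tendsto.congr' hcong.symm ((hdt hmem).abs)

/-- smooth "saw" approximations -/
def sawF (m : ℕ) (t : ℝ) : ℝ :=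
  1 + (Real.pi / (2 * ((m : ℝ) + 1))) * (1 - Real.cos (((m : ℝ) + 1) * t))

def sawG (m : ℕ) (t : ℝ) : ℝ := sawF m t - Real.pi / ((m : ℝ) + 1)

lemma nR_pos (m : ℕ) : (0 : ℝ) < (m : ℝ) + 1 := by positivity

lemma sawF_hasDerivAt (m : ℕ) (t : ℝ) :
    HasDerivAt (sawF m) ((Real.pi / 2) * Real.sin (((m : ℝ) + 1) * t)) t := by
  have h1 : HasDerivAt (fun t : ℝ => ((m : ℝ) + 1) * t) ((m : ℝ) + 1) t := by
    simpa using (hasDerivAt_id t).const_mul ((m : ℝ) + 1)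
  have h2 := h1.cos
  have h3 := ((h2.const_sub 1).const_mul (Real.pi / (2 * ((m : ℝ) + 1)))).const_add 1
  refine h3.congr_deriv ?_
  field_simp
lemma sawG_hasDerivAt (m : ℕ) (t : ℝ) :
    HasDerivAt (sawG m) ((Real.pi / 2) * Real.sin (((m : ℝ) + 1) * t)) t :=
  (sawF_hasDerivAt m t).sub_const _

lemma sawF_deriv (m : ℕ) (t : ℝ) :
    deriv (sawF m) t = (Real.pi / 2) * Real.sin (((m : ℝ) + 1) * t) :=
  (sawF_hasDerivAt m t).deriv

lemma sawG_deriv (m : ℕ) (t : ℝ) :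
    deriv (sawG m) t = (Real.pi / 2) * Real.sin (((m : ℝ) + 1) * t) :=
  (sawG_hasDerivAt m t).deriv

lemma sawF_ge_one (m : ℕ) (t : ℝ) : 1 ≤ sawF m t := by
  have h1 : Real.cos (((m : ℝ) + 1) * t) ≤ 1 := Real.cos_le_one _
  have h2 : (0:ℝ) ≤ Real.pi / (2 * ((m : ℝ) + 1)) := by positivity
  unfold sawF
  nlinarith

lemma sawF_le (m : ℕ) (t : ℝ) : sawF m t ≤ 1 + Real.pi := by
  have h1 : -1 ≤ Real.cos (((m : ℝ) + 1) * t) := Real.neg_one_le_cos _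
  have h2 : (0:ℝ) < (m : ℝ) + 1 := nR_pos m
  have h3 : Real.pi / (2 * ((m : ℝ) + 1)) * 2 ≤ Real.pi := by
    rw [div_mul_eq_mul_div]
    rw [div_le_iff₀ (by positivity)]
    nlinarith [Real.pi_pos]
  have h4 : (0:ℝ) ≤ Real.pi / (2 * ((m : ℝ) + 1)) := by positivity
  unfold sawF
  nlinarith

lemma sawG_eq (m : ℕ) (t : ℝ) :
    sawG m t = 1 - (Real.pi / (2 * ((m : ℝ) + 1))) * (1 + Real.cos (((m : ℝ) + 1) * t)) := by
  unfold sawG sawF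
  have h2 : ((m : ℝ) + 1) ≠ 0 := (nR_pos m).ne'
  field_simp
  ring

lemma sawG_le_one (m : ℕ) (t : ℝ) : sawG m t ≤ 1 := by
  rw [sawG_eq]
  have h1 : -1 ≤ Real.cos (((m : ℝ) + 1) * t) := Real.neg_one_le_cos _
  have h4 : (0:ℝ) ≤ Real.pi / (2 * ((m : ℝ) + 1)) := by positivity
  nlinarith

lemma sawG_lt_one (m : ℕ) (t : ℝ) (h : Real.cos (((m : ℝ) + 1) * t) ≠ -1) : sawG m t < 1 := by
  rw [sawG_eq]
  have h1 : -1 < Real.cos (((m : ℝ) + 1) * t) :=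
    lt_of_le_of_ne (Real.neg_one_le_cos _) (Ne.symm h)
  have h4 : (0:ℝ) < Real.pi / (2 * ((m : ℝ) + 1)) := by positivity
  nlinarith

lemma sawF_periodic (m : ℕ) : Function.Periodic (sawF m) (2 * Real.pi) := by
  intro x
  unfold sawF
  congr 2
  have : ((m : ℝ) + 1) * (x + 2 * Real.pi)
      = ((m : ℝ) + 1) * x + ((m + 1 : ℤ) : ℝ) * (2 * Real.pi) := by push_cast; ring
  rw [this, Real.cos_add_int_mul_two_pi]

lemma sawG_periodic (m : ℕ) : Function.Periodic (sawG m) (2 * Real.pi) := by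
  intro x
  unfold sawG
  rw [sawF_periodic m x]

lemma saw_lip (m : ℕ) (h : ℝ → ℝ)
    (hd : ∀ t, HasDerivAt h ((Real.pi / 2) * Real.sin (((m : ℝ) + 1) * t)) t) :
    LipschitzWith (Real.toNNReal (1 + Real.pi)) h := by
  apply lipschitzWith_of_nnnorm_deriv_le (fun t => (hd t).differentiableAt)
  intro x
  rw [← NNReal.coe_le_coe, coe_nnnorm, Real.coe_toNNReal _ (by positivity)]
  rw [(hd x).deriv, Real.norm_eq_abs, abs_mul,
    abs_of_nonneg (by positivity : (0:ℝ) ≤ Real.pi / 2)]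
  have := abs_le.2 ⟨Real.neg_one_le_sin (((m : ℝ) + 1) * x), Real.sin_le_one _⟩
  nlinarith [Real.pi_pos]

lemma abs_sin_periodic : Function.Periodic (fun x => |Real.sin x|) Real.pi := by
  intro x
  simp [Real.sin_add_pi, abs_neg]

lemma abs_sin_intInt : ∀ t₁ t₂ : ℝ, IntervalIntegrable (fun x => |Real.sin x|) volume t₁ t₂ :=
  fun _ _ => (Real.continuous_sin.abs).intervalIntegrable _ _

lemma integral_abs_sin_pi : ∫ x in (0:ℝ)..Real.pi, |Real.sin x| = 2 := by
  have h : ∫ x in (0:ℝ)..Real.pi, |Real.sin x| = ∫ x in (0:ℝ)..Real.pi, Real.sin x := by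
    apply intervalIntegral.integral_congr
    intro x hx
    rw [Set.uIcc_of_le Real.pi_pos.le] at hx
    exact abs_of_nonneg (Real.sin_nonneg_of_nonneg_of_le_pi hx.1 hx.2)
  rw [h, integral_sin]
  simp [Real.cos_pi]
  norm_num

lemma integral_abs_sin_mul (m : ℕ) :
    ∫ t in (0:ℝ)..(2 * Real.pi), |Real.sin (((m : ℝ) + 1) * t)| = 4 := by
  have hn : ((m : ℝ) + 1) ≠ 0 := (nR_pos m).ne'
  rw [intervalIntegral.integral_comp_mul_left (fun x => |Real.sin x|) hn]
  have h1 : ((m : ℝ) + 1) * (2 * Real.pi) = 0 + ((2 * (m + 1) : ℤ)) • Real.pi := by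
    rw [zsmul_eq_mul]
    push_cast
    ring
  rw [mul_zero, h1, abs_sin_periodic.intervalIntegral_add_zsmul_eq _ _ abs_sin_intInt,
    zero_add, integral_abs_sin_pi]
  simp only [smul_eq_mul, zsmul_eq_mul]
  push_cast
  field_simp
  ring

lemma Vex_sawF (m : ℕ) : Vex (sawF m) = 2 * Real.pi := by
  rw [Vex_eq]
  have h : ∀ t ∈ Set.uIcc (0:ℝ) (2 * Real.pi),
      Dq (sawF m) t = (Real.pi / 2) * |Real.sin (((m : ℝ) + 1) * t)| := by
    intro t _
    unfold Dq
    rw [sawF_deriv, Set.indicator_of_mem (show sawF m t ∈ Set.Ici 1 from sawF_ge_one m t), mul_one, abs_mul,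
      abs_of_nonneg (by positivity : (0:ℝ) ≤ Real.pi / 2)]
  rw [intervalIntegral.integral_congr h, intervalIntegral.integral_const_mul,
    integral_abs_sin_mul]
  ring

lemma Vex_sawG (m : ℕ) : Vex (sawG m) = 0 := by
  rw [Vex_eq]
  have hB : Set.Countable {t : ℝ | Real.cos (((m : ℝ) + 1) * t) = -1} := by
    apply Set.Countable.mono _ (Set.countable_range
      (fun k : ℤ => ((k : ℝ) * (2 * Real.pi) - Real.pi) / ((m : ℝ) + 1)))
    intro t ht
    have h1 : Real.cos (((m : ℝ) + 1) * t + Real.pi) = 1 := by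
      rw [Real.cos_add_pi, ht]; norm_num
    obtain ⟨k, hk⟩ := (Real.cos_eq_one_iff _).1 h1
    refine ⟨k, ?_⟩
    have hn : ((m : ℝ) + 1) ≠ 0 := (nR_pos m).ne'
    field_simp
    linarith
  have hae : ∀ᵐ t : ℝ, t ∈ Set.uIoc (0:ℝ) (2 * Real.pi) → Dq (sawG m) t = 0 := by
    have := hB.measure_zero volume
    rw [← compl_compl {t : ℝ | Real.cos (((m : ℝ) + 1) * t) = -1}] at this
    have h2 : ∀ᵐ t : ℝ, Real.cos (((m : ℝ) + 1) * t) ≠ -1 := by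
      rw [ae_iff]
      simpa using this
    filter_upwards [h2] with t ht _
    unfold Dq
    rw [Set.indicator_of_notMem (by simpa using (sawG_lt_one m t ht).not_ge), mul_zero]
  calc ∫ t in (0:ℝ)..(2*Real.pi), Dq (sawG m) t
      = ∫ t in (0:ℝ)..(2*Real.pi), (0:ℝ) := intervalIntegral.integral_congr_ae hae
    _ = 0 := by simp

lemma dTau_saw (m : ℕ) : dTauC (sawF m) (sawG m) = Real.pi / ((m : ℝ) + 1) := by
  unfold dTauC
  have h1 : ∀ t : ℝ, |sawF m t - sawG m t| = Real.pi / ((m : ℝ) + 1) := by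
    intro t
    unfold sawG
    rw [sub_sub_cancel, abs_of_pos (by positivity)]
  have hne : Nonempty (Set.Icc (0:ℝ) (2 * Real.pi)) :=
    Set.Nonempty.to_subtype (Set.nonempty_Icc.2 (by positivity))
  have h2 : (⨆ t : Set.Icc (0 : ℝ) (2 * Real.pi), |sawF m t - sawG m t|)
      = Real.pi / ((m : ℝ) + 1) := by
    have : (fun t : Set.Icc (0:ℝ) (2 * Real.pi) => |sawF m t - sawG m t|)
        = fun _ => Real.pi / ((m : ℝ) + 1) := funext fun t => h1 t
    rw [this, ciSup_const]
  have h3 : ∀ t : ℝ, |deriv (sawF m) t - deriv (sawG m) t| = 0 := by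
    intro t
    rw [sawF_deriv, sawG_deriv, sub_self, abs_zero]
  rw [h2]
  have : (∫ t in (0:ℝ)..(2*Real.pi), |deriv (sawF m) t - deriv (sawG m) t|) = 0 := by
    rw [intervalIntegral.integral_congr (g := fun _ => (0:ℝ)) (fun t _ => h3 t)]
    simp
  rw [this, add_zero]

lemma dTau_saw_tendsto : Tendsto (fun m => dTauC (sawF m) (sawG m)) atTop (𝓝 0) := by
  simp only [dTau_saw]
  have h := tendsto_one_div_add_atTop_nhds_zero_nat.const_mul Real.pi
  simpa [div_eq_mul_inv, mul_comm, one_div, mul_zero] using h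

lemma saw_normBound (m : ℕ) :
    NormBoundC (1 + Real.pi) (sawF m) ∧ NormBoundC (1 + Real.pi) (sawG m) := by
  have hπ := Real.pi_pos
  refine ⟨⟨fun t => ?_, saw_lip m _ (sawF_hasDerivAt m)⟩,
    ⟨fun t => ?_, saw_lip m _ (sawG_hasDerivAt m)⟩⟩
  · rw [abs_le]
    constructor
    · linarith [sawF_ge_one m t]
    · exact sawF_le m t
  · rw [abs_le]
    have hle := sawG_le_one m t
    have hge : 1 - Real.pi / ((m:ℝ)+1) ≤ sawG m t := by
      unfold sawG
      linarith [sawF_ge_one m t]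
    have : Real.pi / ((m:ℝ)+1) ≤ Real.pi := by
      rw [div_le_iff₀ (nR_pos m)]
      nlinarith [Nat.cast_nonneg (α := ℝ) m]
    constructor <;> linarith

lemma saw_lipC (m : ℕ) : LipC (sawF m) ∧ LipC (sawG m) :=
  ⟨⟨sawF_periodic m, _, saw_lip m _ (sawF_hasDerivAt m)⟩,
   ⟨sawG_periodic m, _, saw_lip m _ (sawG_hasDerivAt m)⟩⟩

lemma volume_Icc_toReal : (volume (Set.Icc (0 : ℝ) (2 * Real.pi))).toReal = 2 * Real.pi := by
  rw [Real.volume_Icc, sub_zero, ENNReal.toReal_ofReal (by positivity)]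

/-- `Vex` is a rotation-invariant τ-continuous valuation on `Lip(S¹)`,
but it is not uniformly τ-continuous: there are sequences `f_m, g_m` with uniformly
bounded Lipschitz norm and `d_τ(f_m, g_m) → 0`, while `Vex f_m = H¹([0,2π])` and
`Vex g_m = 0` for all `m`. -/
theorem Vex_tau_continuous_not_uniformly :
    IsValC Vex ∧ RotInvC Vex ∧ TauContC Vex ∧ ¬ UnifTauContC Vex ∧
    ∃ (fm gm : ℕ → ℝ → ℝ) (M : ℝ),
      (∀ m, LipC (fm m) ∧ LipC (gm m) ∧ NormBoundC M (fm m) ∧ NormBoundC M (gm m)) ∧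
      Tendsto (fun m => dTauC (fm m) (gm m)) atTop (𝓝 0) ∧
      (∀ m, Vex (fm m) = (volume (Set.Icc (0 : ℝ) (2 * Real.pi))).toReal ∧
        Vex (gm m) = 0) := by
  refine ⟨Vex_isVal, Vex_rotInv, ?_, ?_, sawF, sawG, 1 + Real.pi, ?_, dTau_saw_tendsto, ?_⟩
  · intro fk f h1 h2 h3
    exact Vex_tauCont fk f h1 h2 ⟨h3.1, h3.2.1, h3.2.2⟩
  · intro U
    obtain ⟨δ, hδ, hU⟩ := U (2 * Real.pi) (by positivity) (1 + Real.pi) (by positivity)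
    obtain ⟨m, hm⟩ := (dTau_saw_tendsto.eventually (eventually_lt_nhds hδ)).exists
    have h := hU (sawF m) (sawG m) (saw_lipC m).1 (saw_lipC m).2
      (saw_normBound m).1 (saw_normBound m).2 hm
    rw [Vex_sawF, Vex_sawG, sub_zero, abs_of_pos (by positivity)] at h
    exact lt_irrefl _ h
  · intro m
    exact ⟨(saw_lipC m).1, (saw_lipC m).2, (saw_normBound m).1, (saw_normBound m).2⟩
  · intro m
    exact ⟨by rw [Vex_sawF, volume_Icc_toReal], Vex_sawG m⟩
end
end
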